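/- arXiv:0802.3448 — 6 statements merged into one kernel-verified Lean document; each statement's English description precedes it below -/
import Mathlib

section
/- Let r₁ < r₂ < ... < r_k be the order statistics of independent exponential random variables with rates w(i₁),...,w(i_n), conditioned on the event that the items of k smallest ranks are i₁,...,i_k in this increasing order. Then the consecutive differences r₁, r₂ - r₁, ..., r_k - r_{k-1} are independent, and r_j - r_{j-1} is exponentially distributed with rate W - ∑_{ℓ<j} w(i_ℓ), where W = ∑_{ℓ=1}^n w(i_ℓ) (with r₀ := 0). -/
open MeasureTheory ProbabilityTheory

namespace RankDiff
open MeasureTheory ProbabilityTheory Real Set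
open scoped ENNReal


lemma expMeasure_eq_withDensity (r : ℝ) :
    expMeasure r = volume.withDensity (exponentialPDF r) := rfl

lemma expMeasure_apply {r : ℝ} {s : Set ℝ} (hs : MeasurableSet s) :
    expMeasure r s = ∫⁻ x in s, exponentialPDF r x := by
  rw [expMeasure_eq_withDensity, withDensity_apply _ hs]

lemma expMeasure_univ {r : ℝ} (hr : 0 < r) : expMeasure r Set.univ = 1 := by
  have := isProbabilityMeasure_expMeasure hr
  exact measure_univ

lemma expMeasure_Iic {r : ℝ} (hr : 0 < r) (x : ℝ) :
    expMeasure r (Iic x) = ENNReal.ofReal (if 0 ≤ x then 1 - rexp (-(r * x)) else 0) := by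
  rw [expMeasure_apply measurableSet_Iic]
  exact lintegral_exponentialPDF_eq_antiDeriv hr x

lemma expMeasure_Ioi {r t : ℝ} (hr : 0 < r) (ht : 0 ≤ t) :
    expMeasure r (Ioi t) = ENNReal.ofReal (rexp (-(r * t))) := by
  have := isProbabilityMeasure_expMeasure hr
  have h1 : Ioi t = (Iic t)ᶜ := by ext y; simp
  rw [h1, measure_compl measurableSet_Iic (measure_ne_top _ _), measure_univ,
    expMeasure_Iic hr t, if_pos ht]
  rw [← ENNReal.ofReal_one, ← ENNReal.ofReal_sub _ (by nlinarith [exp_le_one_iff.2 (by nlinarith : -(r*t) ≤ 0), exp_pos (-(r*t))])]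
  congr 1
  ring

/-- The exponential measure of a set equals a rescaled integral of `exp (-r u)`
over the positive part of the set. -/
lemma expMeasure_eq_lintegral {r : ℝ} (hr : 0 < r) {B : Set ℝ} (hB : MeasurableSet B) :
    expMeasure r B
      = ENNReal.ofReal r * ∫⁻ u in B ∩ Ioi 0, ENNReal.ofReal (rexp (-(r * u))) := by
  rw [expMeasure_apply hB]
  have h1 : ∀ᵐ u ∂(volume : Measure ℝ),
      exponentialPDF r u = (Ioi (0:ℝ)).indicator (exponentialPDF r) u := by
    filter_upwards [compl_mem_ae_iff.2 (volume_singleton (a := (0:ℝ)))] with u hu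
    rcases lt_trichotomy u 0 with h | h | h
    · rw [exponentialPDF_of_neg h, Set.indicator_of_notMem (by simpa using h.le)]
    · exact absurd h hu
    · rw [Set.indicator_of_mem (by simpa using h)]
  rw [lintegral_congr_ae (ae_restrict_of_ae h1), lintegral_indicator measurableSet_Ioi _,
    Measure.restrict_restrict measurableSet_Ioi, Set.inter_comm, ← lintegral_const_mul' _ _ ENNReal.ofReal_ne_top]
  refine setLIntegral_congr_fun_ae (hB.inter measurableSet_Ioi) (ae_of_all _ fun u hu => ?_)
  rw [exponentialPDF_of_nonneg (le_of_lt hu.2), ENNReal.ofReal_mul hr.le]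

lemma measurable_exponentialPDF (r : ℝ) : Measurable (exponentialPDF r) :=
  (measurable_exponentialPDFReal r).ennreal_ofReal

/-- The key one-dimensional integral. -/
lemma key_int {wi W' t : ℝ} (hwi : 0 < wi) (hW' : 0 ≤ W') (ht : 0 ≤ t)
    {B : Set ℝ} (hB : MeasurableSet B) :
    ∫⁻ c, ({c : ℝ | t < c ∧ c - t ∈ B}.indicator 1 c)
        * ENNReal.ofReal (rexp (-(W' * c))) ∂(expMeasure wi)
      = ENNReal.ofReal (rexp (-((W' + wi) * t)))
        * (ENNReal.ofReal wi / ENNReal.ofReal (W' + wi)) * expMeasure (W' + wi) B := by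
  set W := W' + wi with hWdef
  have hW : 0 < W := by positivity
  have hS : MeasurableSet {c : ℝ | t < c ∧ c - t ∈ B} :=
    (measurableSet_Ioi (a := t)).inter ((measurable_sub_const t) hB)
  -- step 1: rewrite integrand as an indicator
  have h1 : ∀ c : ℝ, ({c : ℝ | t < c ∧ c - t ∈ B}.indicator 1 c)
      * ENNReal.ofReal (rexp (-(W' * c)))
      = {c : ℝ | t < c ∧ c - t ∈ B}.indicator
          (fun c => ENNReal.ofReal (rexp (-(W' * c)))) c := by
    intro c
    by_cases h : c ∈ {c : ℝ | t < c ∧ c - t ∈ B} <;>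
      simp [Set.indicator_apply, h]
  simp_rw [h1]
  have hg : Measurable fun c : ℝ => ENNReal.ofReal (rexp (-(W' * c))) := by fun_prop
  rw [lintegral_indicator hS, expMeasure_eq_withDensity, restrict_withDensity hS,
    lintegral_withDensity_eq_lintegral_mul _ (measurable_exponentialPDF wi) hg]
  -- on S the density is `wi * exp (-(wi * c))`, combine exponentials
  have h2 : ∫⁻ c in {c : ℝ | t < c ∧ c - t ∈ B},
      (exponentialPDF wi * fun c => ENNReal.ofReal (rexp (-(W' * c)))) c
      = ∫⁻ c in {c : ℝ | t < c ∧ c - t ∈ B}, ENNReal.ofReal (wi * rexp (-(W * c))) := by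
    refine setLIntegral_congr_fun_ae hS (ae_of_all _ fun c hc => ?_)
    have hc0 : (0:ℝ) ≤ c := le_trans ht (le_of_lt hc.1)
    simp only [Pi.mul_apply, exponentialPDF_of_nonneg hc0]
    rw [← ENNReal.ofReal_mul (by positivity)]
    congr 1
    rw [mul_assoc, ← Real.exp_add]
    congr 2
    ring
  rw [h2]
  -- translate by `t`
  have h3 : ∫⁻ c in {c : ℝ | t < c ∧ c - t ∈ B}, ENNReal.ofReal (wi * rexp (-(W * c)))
      = ∫⁻ u, ({c : ℝ | t < c ∧ c - t ∈ B}.indicator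
          (fun c => ENNReal.ofReal (wi * rexp (-(W * c))))) (u + t) := by
    rw [lintegral_add_right_eq_self
      ({c : ℝ | t < c ∧ c - t ∈ B}.indicator fun c => ENNReal.ofReal (wi * rexp (-(W * c)))) t,
      lintegral_indicator hS]
  rw [h3]
  have h4 : ∀ u : ℝ, ({c : ℝ | t < c ∧ c - t ∈ B}.indicator
        (fun c => ENNReal.ofReal (wi * rexp (-(W * c))))) (u + t)
      = ENNReal.ofReal (rexp (-(W * t)) * wi)
        * (B ∩ Ioi 0).indicator (fun u => ENNReal.ofReal (rexp (-(W * u)))) u := by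
    intro u
    have hmem : u + t ∈ {c : ℝ | t < c ∧ c - t ∈ B} ↔ u ∈ B ∩ Ioi 0 := by
      simp only [Set.mem_setOf_eq, Set.mem_inter_iff, Set.mem_Ioi]
      constructor
      · rintro ⟨h1', h2'⟩; exact ⟨by simpa using h2', by linarith⟩
      · rintro ⟨h1', h2'⟩; exact ⟨by linarith, by simpa using h1'⟩
    by_cases h : u ∈ B ∩ Ioi 0
    · rw [Set.indicator_of_mem (hmem.2 h), Set.indicator_of_mem h,
        ← ENNReal.ofReal_mul (by positivity)]
      congr 1
      rw [show -(W * (u + t)) = -(W * t) + -(W * u) by ring, Real.exp_add]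
      ring
    · rw [Set.indicator_of_notMem (fun hc => h (hmem.1 hc)), Set.indicator_of_notMem h,
        mul_zero]
  simp_rw [h4]
  rw [lintegral_const_mul' _ _ ENNReal.ofReal_ne_top,
    lintegral_indicator (hB.inter measurableSet_Ioi),
    expMeasure_eq_lintegral hW hB]
  rw [ENNReal.ofReal_mul (by positivity), mul_assoc, mul_assoc]
  congr 1
  rw [← mul_assoc, ENNReal.div_mul_cancel (by simp [hW]) ENNReal.ofReal_ne_top]

variable {ι : Type*} [DecidableEq ι]

/-- The recursively-defined ordering/difference event. -/
def Ev : Finset ι → List (ι × Set ℝ) → ℝ → Set (ι → ℝ)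
  | s, [], t => {x | ∀ b ∈ s, t < x b}
  | s, (i, Bi) :: LB, t => {x | t < x i ∧ x i - t ∈ Bi ∧ x ∈ Ev (s.erase i) LB (x i)}

/-- The product value. -/
noncomputable def Pfun (w : ι → ℝ) : Finset ι → List (ι × Set ℝ) → ℝ≥0∞
  | _, [] => 1
  | s, (i, Bi) :: LB =>
      (ENNReal.ofReal (w i) / ENNReal.ofReal (∑ b ∈ s, w b))
        * expMeasure (∑ b ∈ s, w b) Bi * Pfun w (s.erase i) LB

lemma Ev_pair_measurableSet (s : Finset ι) (LB : List (ι × Set ℝ))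
    (hB : ∀ p ∈ LB, MeasurableSet p.2) :
    MeasurableSet {p : (ι → ℝ) × ℝ | p.1 ∈ Ev s LB p.2} := by
  induction LB generalizing s with
  | nil =>
      have : {p : (ι → ℝ) × ℝ | p.1 ∈ Ev s ([] : List (ι × Set ℝ)) p.2}
          = ⋂ b ∈ s, {p : (ι → ℝ) × ℝ | p.2 < p.1 b} := by
        ext p; simp [Ev]
      rw [this]
      refine MeasurableSet.biInter s.countable_toSet fun b _ => ?_
      exact measurableSet_lt measurable_snd ((measurable_pi_apply b).comp measurable_fst)
  | cons p LB ih =>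
      obtain ⟨i, Bi⟩ := p
      have : {q : (ι → ℝ) × ℝ | q.1 ∈ Ev s ((i, Bi) :: LB) q.2}
          = {q : (ι → ℝ) × ℝ | q.2 < q.1 i} ∩ {q | q.1 i - q.2 ∈ Bi}
            ∩ ((fun q : (ι → ℝ) × ℝ => (q.1, q.1 i)) ⁻¹'
                {q : (ι → ℝ) × ℝ | q.1 ∈ Ev (s.erase i) LB q.2}) := by
        ext q; simp [Ev, and_assoc]
      rw [this]
      have hBi := hB (i, Bi) (List.mem_cons_self)
      have hrest := ih (s.erase i) fun p hp => hB p (List.mem_cons_of_mem _ hp)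
      refine MeasurableSet.inter (MeasurableSet.inter ?_ ?_) ?_
      · exact measurableSet_lt measurable_snd ((measurable_pi_apply i).comp measurable_fst)
      · exact (((measurable_pi_apply i).comp measurable_fst).sub measurable_snd) hBi
      · exact hrest.preimage (measurable_fst.prodMk
          ((measurable_pi_apply i).comp measurable_fst))

lemma Ev_measurableSet (s : Finset ι) (LB : List (ι × Set ℝ))
    (hB : ∀ p ∈ LB, MeasurableSet p.2) (t : ℝ) :
    MeasurableSet (Ev s LB t) := by
  have : Ev s LB t = (fun x : ι → ℝ => (x, t)) ⁻¹' {p : (ι → ℝ) × ℝ | p.1 ∈ Ev s LB p.2} := by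
    ext x; simp
  rw [this]
  exact (Ev_pair_measurableSet s LB hB).preimage (measurable_id.prodMk measurable_const)


lemma mem_Ev_nil {s : Finset ι} {t : ℝ} {x : ι → ℝ} :
    x ∈ Ev s ([] : List (ι × Set ℝ)) t ↔ ∀ b ∈ s, t < x b := Iff.rfl

lemma mem_Ev_cons {s : Finset ι} {i : ι} {Bi : Set ℝ} {LB : List (ι × Set ℝ)} {t : ℝ}
    {x : ι → ℝ} :
    x ∈ Ev s ((i, Bi) :: LB) t ↔ t < x i ∧ x i - t ∈ Bi ∧ x ∈ Ev (s.erase i) LB (x i) :=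
  Iff.rfl

lemma indicator_ne_top {α : Type*} (S : Set α) (a : α) :
    S.indicator (1 : α → ℝ≥0∞) a ≠ ⊤ := by
  by_cases h : a ∈ S <;> simp [Set.indicator_apply, h]

lemma lmarginal_factor (μ : ∀ _ : ι, Measure ℝ) [∀ j, SigmaFinite (μ j)]
    (s : Finset ι) {i : ι} (hi : i ∉ s) (z : ι → ℝ)
    (f g : (ι → ℝ) → ℝ≥0∞) (κ : ℝ≥0∞) (hκ : κ ≠ ⊤)
    (h : ∀ y : ι → ℝ, y i = z i → f y = κ * g y) :
    (∫⋯∫⁻_s, f ∂μ) z = κ * (∫⋯∫⁻_s, g ∂μ) z := by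
  rw [lmarginal, lmarginal, ← lintegral_const_mul' κ _ hκ]
  refine lintegral_congr fun y => h _ ?_
  simp [Function.updateFinset, hi]

lemma keys_erase {i : ι} {Bi : Set ℝ} {LB : List (ι × Set ℝ)} {s : Finset ι}
    (hnd : (List.map Prod.fst ((i, Bi) :: LB)).Nodup)
    (hkeys : ∀ p ∈ (i, Bi) :: LB, p.1 ∈ s) :
    ∀ p ∈ LB, p.1 ∈ s.erase i := by
  intro p hp
  refine Finset.mem_erase.2 ⟨?_, hkeys _ (List.mem_cons_of_mem _ hp)⟩
  intro he
  rw [List.map_cons, List.nodup_cons] at hnd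
  exact hnd.1 (he ▸ List.mem_map.2 ⟨p, hp, rfl⟩)

lemma Pfun_ne_top [Fintype ι] {w : ι → ℝ} (hw : ∀ i, 0 < w i) :
    ∀ (LB : List (ι × Set ℝ)) (s : Finset ι), (List.map Prod.fst LB).Nodup →
      (∀ p ∈ LB, p.1 ∈ s) → Pfun w s LB ≠ ⊤ := by
  intro LB
  induction LB with
  | nil => intro s _ _; simp [Pfun]
  | cons p LB ih =>
      obtain ⟨i, Bi⟩ := p
      intro s hnd hkeys
      have his : i ∈ s := hkeys _ (List.mem_cons_self)
      have hWs : 0 < ∑ b ∈ s, w b :=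
        Finset.sum_pos (fun b _ => hw b) ⟨i, his⟩
      have h1 : ENNReal.ofReal (w i) / ENNReal.ofReal (∑ b ∈ s, w b) ≠ ⊤ :=
        (ENNReal.div_lt_top ENNReal.ofReal_ne_top (by simp [hWs])).ne
      have h2 : expMeasure (∑ b ∈ s, w b) Bi ≠ ⊤ := by
        have := isProbabilityMeasure_expMeasure hWs
        exact measure_ne_top _ _
      have h3 : Pfun w (s.erase i) LB ≠ ⊤ :=
        ih _ ((List.map_cons (f := Prod.fst) ▸ hnd).of_cons) (keys_erase hnd hkeys)
      exact ENNReal.mul_ne_top (ENNReal.mul_ne_top h1 h2) h3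

section Marginal
variable [Fintype ι] {w : ι → ℝ}

lemma lmarginal_Ev_nil (hw : ∀ i, 0 < w i) (s : Finset ι)
    {t : ℝ} (ht : 0 ≤ t) (x : ι → ℝ) :
    (∫⋯∫⁻_s, (Ev s ([] : List (ι × Set ℝ)) t).indicator 1 ∂(fun i => expMeasure (w i))) x
      = ENNReal.ofReal (rexp (-((∑ b ∈ s, w b) * t))) := by
  haveI : ∀ i, IsProbabilityMeasure (expMeasure (w i)) :=
    fun i => isProbabilityMeasure_expMeasure (hw i)
  induction s using Finset.induction_on generalizing x with
  | empty =>
      have hEv : Ev (∅ : Finset ι) ([] : List (ι × Set ℝ)) t = Set.univ := by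
        ext y; simp [mem_Ev_nil]
      simp [hEv, Set.indicator_univ]
  | @insert a s hi ih =>
      have hf : Measurable ((Ev (insert a s) ([] : List (ι × Set ℝ)) t).indicator
          (1 : (ι → ℝ) → ℝ≥0∞)) :=
        measurable_const.indicator (Ev_measurableSet _ _ (by simp) t)
      rw [lmarginal_insert _ hf hi x]
      have hsplit : ∀ c : ℝ,
          (∫⋯∫⁻_s, (Ev (insert a s) ([] : List (ι × Set ℝ)) t).indicator 1
            ∂(fun i => expMeasure (w i))) (Function.update x a c)
          = ((Set.Ioi t).indicator 1 c)
            * (∫⋯∫⁻_s, (Ev s ([] : List (ι × Set ℝ)) t).indicator 1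
              ∂(fun i => expMeasure (w i))) (Function.update x a c) := by
        intro c
        refine lmarginal_factor _ s hi _ _ _ _ (indicator_ne_top _ _) fun y hy => ?_
        rw [Function.update_self] at hy
        subst hy
        by_cases h1 : t < y a
        · by_cases h2 : y ∈ Ev s ([] : List (ι × Set ℝ)) t
          · have hmem : y ∈ Ev (insert a s) ([] : List (ι × Set ℝ)) t :=
              mem_Ev_nil.2 fun b hb => (Finset.mem_insert.1 hb).elim (fun h => h ▸ h1)
                (fun h => mem_Ev_nil.1 h2 b h)
            simp [Set.indicator_of_mem, hmem, h2, Set.indicator_apply, h1]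
          · have hmem : y ∉ Ev (insert a s) ([] : List (ι × Set ℝ)) t := fun hmem =>
              h2 (mem_Ev_nil.2 fun b hb => mem_Ev_nil.1 hmem b (Finset.mem_insert_of_mem hb))
            simp [Set.indicator_of_notMem, hmem, h2, Set.indicator_apply]
        · have hmem : y ∉ Ev (insert a s) ([] : List (ι × Set ℝ)) t := fun hmem =>
            h1 (mem_Ev_nil.1 hmem a (Finset.mem_insert_self a s))
          simp [Set.indicator_of_notMem hmem, Set.indicator_apply, h1]
      simp_rw [hsplit, ih]
      rw [lintegral_mul_const' _ _ ENNReal.ofReal_ne_top]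
      have : ∫⁻ c, (Set.Ioi t).indicator 1 c ∂(expMeasure (w a))
          = ENNReal.ofReal (rexp (-(w a * t))) := by
        rw [lintegral_indicator_one measurableSet_Ioi, expMeasure_Ioi (hw a) ht]
      rw [this, ← ENNReal.ofReal_mul (by positivity), ← Real.exp_add,
        Finset.sum_insert hi]
      congr 2
      ring


lemma lmarginal_Ev (hw : ∀ i, 0 < w i) :
    ∀ (LB : List (ι × Set ℝ)) (s : Finset ι), (List.map Prod.fst LB).Nodup →
      (∀ p ∈ LB, p.1 ∈ s) → (∀ p ∈ LB, MeasurableSet p.2) →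
      ∀ {t : ℝ}, 0 ≤ t → ∀ x : ι → ℝ,
      (∫⋯∫⁻_s, (Ev s LB t).indicator 1 ∂(fun i => expMeasure (w i))) x
        = ENNReal.ofReal (rexp (-((∑ b ∈ s, w b) * t))) * Pfun w s LB := by
  haveI : ∀ i, IsProbabilityMeasure (expMeasure (w i)) :=
    fun i => isProbabilityMeasure_expMeasure (hw i)
  intro LB
  induction LB with
  | nil =>
      intro s _ _ _ t ht x
      rw [lmarginal_Ev_nil hw s ht x]
      simp [Pfun]
  | cons p LB ih =>
      obtain ⟨i, Bi⟩ := p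
      intro s hnd hkeys hB t ht x
      have his : i ∈ s := hkeys _ (List.mem_cons_self)
      have hBi : MeasurableSet Bi := hB _ (List.mem_cons_self)
      have hBtail : ∀ p ∈ LB, MeasurableSet p.2 := fun p hp => hB p (List.mem_cons_of_mem _ hp)
      have hW' : 0 ≤ ∑ b ∈ s.erase i, w b := Finset.sum_nonneg fun b _ => (hw b).le
      have hWs : (∑ b ∈ s.erase i, w b) + w i = ∑ b ∈ s, w b := Finset.sum_erase_add s w his
      have hPtop : Pfun w (s.erase i) LB ≠ ⊤ :=
        Pfun_ne_top hw LB _ ((List.map_cons (f := Prod.fst) ▸ hnd).of_cons) (keys_erase hnd hkeys)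
      have hf : Measurable ((Ev s ((i, Bi) :: LB) t).indicator (1 : (ι → ℝ) → ℝ≥0∞)) :=
        measurable_const.indicator (Ev_measurableSet _ _ hB t)
      rw [lmarginal_erase _ hf his x]
      have hinner : ∀ c : ℝ,
          (∫⋯∫⁻_(s.erase i), (Ev s ((i, Bi) :: LB) t).indicator 1
            ∂(fun i => expMeasure (w i))) (Function.update x i c)
          = ({c' : ℝ | t < c' ∧ c' - t ∈ Bi}.indicator 1 c)
            * ENNReal.ofReal (rexp (-((∑ b ∈ s.erase i, w b) * c)))
            * Pfun w (s.erase i) LB := by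
        intro c
        have hfac : (∫⋯∫⁻_(s.erase i), (Ev s ((i, Bi) :: LB) t).indicator 1
              ∂(fun i => expMeasure (w i))) (Function.update x i c)
            = ({c' : ℝ | t < c' ∧ c' - t ∈ Bi}.indicator 1 c)
              * (∫⋯∫⁻_(s.erase i), (Ev (s.erase i) LB c).indicator 1
                ∂(fun i => expMeasure (w i))) (Function.update x i c) := by
          refine lmarginal_factor _ _ (Finset.notMem_erase i s) _ _ _ _
            (indicator_ne_top _ _) fun y hy => ?_
          rw [Function.update_self] at hy
          subst hy
          by_cases h1 : t < y i ∧ y i - t ∈ Bi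
          · by_cases h2 : y ∈ Ev (s.erase i) LB (y i)
            · have hmem : y ∈ Ev s ((i, Bi) :: LB) t := mem_Ev_cons.2 ⟨h1.1, h1.2, h2⟩
              simp [Set.indicator_of_mem, hmem, h2, Set.indicator_apply, h1.1, h1.2]
            · have hmem : y ∉ Ev s ((i, Bi) :: LB) t := fun hm => h2 (mem_Ev_cons.1 hm).2.2
              simp [Set.indicator_of_notMem, hmem, h2, Set.indicator_apply]
          · have hmem : y ∉ Ev s ((i, Bi) :: LB) t := fun hm =>
              h1 ⟨(mem_Ev_cons.1 hm).1, (mem_Ev_cons.1 hm).2.1⟩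
            have hc : y i ∉ {c' : ℝ | t < c' ∧ c' - t ∈ Bi} := h1
            simp [Set.indicator_of_notMem hmem, Set.indicator_of_notMem hc]
        rw [hfac]
        by_cases hc : c ∈ {c' : ℝ | t < c' ∧ c' - t ∈ Bi}
        · have hc0 : (0:ℝ) ≤ c := le_trans ht hc.1.le
          rw [ih _ ((List.map_cons (f := Prod.fst) ▸ hnd).of_cons) (keys_erase hnd hkeys)
            hBtail hc0, Set.indicator_of_mem hc]
          simp [mul_assoc]
        · rw [Set.indicator_of_notMem hc]
          simp
      simp_rw [hinner]
      rw [lintegral_mul_const' _ _ hPtop]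
      have hmul : ∀ c : ℝ, ({c' : ℝ | t < c' ∧ c' - t ∈ Bi}.indicator 1 c)
            * ENNReal.ofReal (rexp (-((∑ b ∈ s.erase i, w b) * c)))
          = ({c' : ℝ | t < c' ∧ c' - t ∈ Bi}.indicator 1 c)
            * ENNReal.ofReal (rexp (-((∑ b ∈ s.erase i, w b) * c))) := fun _ => rfl
      rw [key_int (hw i) hW' ht hBi, hWs]
      rw [Pfun]
      ring

lemma measure_Ev (hw : ∀ i, 0 < w i) (LB : List (ι × Set ℝ))
    (hnd : (List.map Prod.fst LB).Nodup) (hB : ∀ p ∈ LB, MeasurableSet p.2) :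
    Measure.pi (fun i => expMeasure (w i)) (Ev Finset.univ LB 0) = Pfun w Finset.univ LB := by
  haveI : ∀ i, IsProbabilityMeasure (expMeasure (w i)) :=
    fun i => isProbabilityMeasure_expMeasure (hw i)
  rw [← lintegral_indicator_one (Ev_measurableSet _ _ hB 0),
    lintegral_eq_lmarginal_univ (fun _ => 0),
    lmarginal_Ev hw LB Finset.univ hnd (fun p _ => Finset.mem_univ _) hB le_rfl]
  simp

/-- Remove the first `j` keys from `s`. -/
def dropKeys (s : Finset ι) (L : List ι) : Finset ι := L.foldl Finset.erase s

lemma dropKeys_eq_sdiff : ∀ (L : List ι) (s : Finset ι), dropKeys s L = s \ L.toFinset := by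
  intro L
  induction L with
  | nil => intro s; simp [dropKeys]
  | cons a L ih =>
      intro s
      rw [show dropKeys s (a :: L) = dropKeys (s.erase a) L from rfl, ih]
      ext b
      simp only [Finset.mem_sdiff, Finset.mem_erase, List.toFinset_cons, Finset.mem_insert]
      tauto

lemma Pfun_factor (hw : ∀ i, 0 < w i) :
    ∀ (LB : List (ι × Set ℝ)) (s : Finset ι), (List.map Prod.fst LB).Nodup →
      (∀ p ∈ LB, p.1 ∈ s) →
      Pfun w s LB = Pfun w s (LB.map (fun p => (p.1, Set.univ)))
        * ∏ j ∈ Finset.range LB.length,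
            expMeasure (∑ b ∈ dropKeys s (List.take j (LB.map Prod.fst)), w b)
              ((LB.map Prod.snd).getD j Set.univ) := by
  intro LB
  induction LB with
  | nil => intro s _ _; simp [Pfun]
  | cons p LB ih =>
      obtain ⟨i, Bi⟩ := p
      intro s hnd hkeys
      have his : i ∈ s := hkeys _ (List.mem_cons_self)
      have hWs : 0 < ∑ b ∈ s, w b := Finset.sum_pos (fun b _ => hw b) ⟨i, his⟩
      have huniv : expMeasure (∑ b ∈ s, w b) Set.univ = 1 := expMeasure_univ hWs
      have hih := ih (s.erase i) ((List.map_cons (f := Prod.fst) ▸ hnd).of_cons)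
        (keys_erase hnd hkeys)
      show (ENNReal.ofReal (w i) / ENNReal.ofReal (∑ b ∈ s, w b))
          * expMeasure (∑ b ∈ s, w b) Bi * Pfun w (s.erase i) LB = _
      rw [hih]
      rw [show Pfun w s (List.map (fun p : ι × Set ℝ => (p.1, Set.univ)) ((i, Bi) :: LB))
          = (ENNReal.ofReal (w i) / ENNReal.ofReal (∑ b ∈ s, w b))
            * expMeasure (∑ b ∈ s, w b) Set.univ
            * Pfun w (s.erase i) (LB.map (fun p => (p.1, Set.univ))) from rfl]
      rw [show ((i, Bi) :: LB).length = LB.length + 1 from rfl, huniv,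
        Finset.prod_range_succ']
      have h0 : expMeasure (∑ b ∈ dropKeys s (List.take 0 (List.map Prod.fst ((i, Bi) :: LB))), w b)
          ((List.map Prod.snd ((i, Bi) :: LB)).getD 0 Set.univ) = expMeasure (∑ b ∈ s, w b) Bi := by
        rfl
      have hsucc : ∀ j : ℕ,
          expMeasure (∑ b ∈ dropKeys s (List.take (j + 1) (List.map Prod.fst ((i, Bi) :: LB))), w b)
            ((List.map Prod.snd ((i, Bi) :: LB)).getD (j + 1) Set.univ)
          = expMeasure (∑ b ∈ dropKeys (s.erase i) (List.take j (List.map Prod.fst LB)), w b)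
            ((List.map Prod.snd LB).getD j Set.univ) := by
        intro j
        rfl
      simp_rw [h0, hsucc]
      ring

lemma Pfun_univ_ne_zero (hw : ∀ i, 0 < w i) :
    ∀ (LB : List (ι × Set ℝ)) (s : Finset ι), (List.map Prod.fst LB).Nodup →
      (∀ p ∈ LB, p.1 ∈ s) →
      Pfun w s (LB.map (fun p => (p.1, Set.univ))) ≠ 0 := by
  intro LB
  induction LB with
  | nil => intro s _ _; simp [Pfun]
  | cons p LB ih =>
      obtain ⟨i, Bi⟩ := p
      intro s hnd hkeys
      have his : i ∈ s := hkeys _ (List.mem_cons_self)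
      have hWs : 0 < ∑ b ∈ s, w b := Finset.sum_pos (fun b _ => hw b) ⟨i, his⟩
      show (ENNReal.ofReal (w i) / ENNReal.ofReal (∑ b ∈ s, w b))
          * expMeasure (∑ b ∈ s, w b) Set.univ
          * Pfun w (s.erase i) (LB.map (fun p => (p.1, Set.univ))) ≠ 0
      rw [expMeasure_univ hWs]
      refine mul_ne_zero (mul_ne_zero ?_ one_ne_zero) ?_
      · simp only [ne_eq, ENNReal.div_eq_zero_iff, not_or]
        exact ⟨by simp [hw i], ENNReal.ofReal_ne_top⟩
      · exact ih (s.erase i) ((List.map_cons (f := Prod.fst) ▸ hnd).of_cons) (keys_erase hnd hkeys)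


omit [Fintype ι] in
lemma mem_Ev_iff (d : ι × Set ℝ) :
    ∀ (LB : List (ι × Set ℝ)) (s : Finset ι), (List.map Prod.fst LB).Nodup →
      (∀ p ∈ LB, p.1 ∈ s) → ∀ (t : ℝ) (x : ι → ℝ),
      (x ∈ Ev s LB t ↔
        (∀ b ∈ s, t < x b) ∧
        (∀ j, j < LB.length → ∀ b ∈ s,
          b ∉ (List.map Prod.fst LB).take (j+1) → x (LB.getD j d).1 < x b) ∧
        (∀ j, j < LB.length →
          x (LB.getD j d).1 - (if j = 0 then t else x (LB.getD (j-1) d).1)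
            ∈ (LB.getD j d).2)) := by
  intro LB
  induction LB with
  | nil =>
      intro s _ _ t x
      simp [mem_Ev_nil]
  | cons p LB ih =>
      obtain ⟨i, Bi⟩ := p
      intro s hnd hkeys t x
      have his : i ∈ s := hkeys _ (List.mem_cons_self)
      have hndt : (List.map Prod.fst LB).Nodup := (List.map_cons (f := Prod.fst) ▸ hnd).of_cons
      have hkt : ∀ p ∈ LB, p.1 ∈ s.erase i := keys_erase hnd hkeys
      rw [mem_Ev_cons, ih (s.erase i) hndt hkt (x i) x]
      constructor
      · rintro ⟨h1, h2, C1', C2', C3'⟩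
        refine ⟨?_, ?_, ?_⟩
        · intro b hb
          by_cases hbi : b = i
          · exact hbi ▸ h1
          · exact lt_trans h1 (C1' b (Finset.mem_erase.2 ⟨hbi, hb⟩))
        · intro j hj b hb hnb
          match j with
          | 0 =>
              have hbi : b ≠ i := by
                intro hbi
                exact hnb (by simp [hbi])
              exact C1' b (Finset.mem_erase.2 ⟨hbi, hb⟩)
          | Nat.succ m =>
              rw [List.map_cons, List.take_succ_cons, List.mem_cons] at hnb
              push_neg at hnb
              exact C2' m (by simpa using hj) b (Finset.mem_erase.2 ⟨hnb.1, hb⟩) hnb.2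
        · intro j hj
          match j with
          | 0 => simpa using h2
          | Nat.succ m =>
              have := C3' m (by simpa using hj)
              match m with
              | 0 => simpa using this
              | Nat.succ l => simpa using this
      · rintro ⟨C1, C2, C3⟩
        have h1 : t < x i := C1 i his
        refine ⟨h1, by simpa using C3 0 (Nat.succ_pos _), ?_, ?_, ?_⟩
        · intro b hb
          obtain ⟨hbi, hbs⟩ := Finset.mem_erase.1 hb
          refine C2 0 (Nat.succ_pos _) b hbs ?_
          simp [hbi]
        · intro j hj b hb hnb
          obtain ⟨hbi, hbs⟩ := Finset.mem_erase.1 hb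
          refine C2 (j + 1) (by simpa using hj) b hbs ?_
          rw [List.map_cons, List.take_succ_cons, List.mem_cons]
          push_neg
          exact ⟨hbi, hnb⟩
        · intro j hj
          have := C3 (j + 1) (by simpa using hj)
          match j with
          | 0 => simpa using this
          | Nat.succ l => simpa using this


end Marginal

section FinGlue
variable {n k : ℕ}

/-- The `j`-th smallest item. -/
def keyF (hkn : k ≤ n) : Fin k → Fin n := fun j => ⟨(j : ℕ), lt_of_lt_of_le j.2 hkn⟩

/-- The list of (item, difference-set) pairs. -/
def LBl (hkn : k ≤ n) (B : Fin k → Set ℝ) : List (Fin n × Set ℝ) :=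
  (List.finRange k).map fun j => (keyF hkn j, B j)

variable (hkn : k ≤ n)

lemma LBl_keys (B : Fin k → Set ℝ) :
    (LBl hkn B).map Prod.fst = (List.finRange k).map (keyF hkn) := by
  rw [LBl, List.map_map]
  rfl

lemma keyF_injective : Function.Injective (keyF hkn) := fun a b h => by
  simpa [keyF, Fin.ext_iff] using h

lemma LBl_keys_nodup (B : Fin k → Set ℝ) : ((LBl hkn B).map Prod.fst).Nodup := by
  rw [LBl_keys]
  exact (List.nodup_finRange k).map (keyF_injective hkn)

lemma LBl_length (B : Fin k → Set ℝ) : (LBl hkn B).length = k := by simp [LBl]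

lemma LBl_sets_measurable {B : Fin k → Set ℝ} (hB : ∀ j, MeasurableSet (B j)) :
    ∀ p ∈ LBl hkn B, MeasurableSet p.2 := by
  intro p hp
  obtain ⟨j, _, rfl⟩ := List.mem_map.1 hp
  exact hB j

lemma LBl_getD (B : Fin k → Set ℝ) (d : Fin n × Set ℝ) {j : ℕ} (hj : j < k) :
    (LBl hkn B).getD j d = (keyF hkn ⟨j, hj⟩, B ⟨j, hj⟩) := by
  rw [List.getD_eq_getElem _ _ (by rw [LBl_length]; exact hj)]
  simp [LBl]

lemma mem_take_keys (B : Fin k → Set ℝ) {b : Fin n} {j : ℕ} (hj : j ≤ k) :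
    b ∈ ((LBl hkn B).map Prod.fst).take j ↔ (b : ℕ) < j := by
  rw [LBl_keys]
  simp only [List.mem_take_iff_getElem, List.getElem_map, List.getElem_finRange,
    List.length_map, List.length_finRange]
  constructor
  · rintro ⟨m, hm, rfl⟩
    simpa [keyF] using lt_of_lt_of_le (lt_min_iff.1 hm).1 le_rfl
  · intro hbj
    refine ⟨(b : ℕ), lt_min hbj (lt_of_lt_of_le hbj hj), ?_⟩
    apply Fin.ext
    simp [keyF]

lemma rate_sum (w : Fin n → ℝ) (B : Fin k → Set ℝ) {j : ℕ} (hj : j ≤ k) :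
    ∑ b ∈ dropKeys Finset.univ (((LBl hkn B).map Prod.fst).take j), w b
      = (∑ ℓ, w ℓ) - ∑ ℓ ∈ Finset.univ.filter (fun ℓ : Fin n => (ℓ : ℕ) < j), w ℓ := by
  rw [dropKeys_eq_sdiff]
  have hT : (((LBl hkn B).map Prod.fst).take j).toFinset
      = Finset.univ.filter (fun ℓ : Fin n => (ℓ : ℕ) < j) := by
    ext b
    simp [List.mem_toFinset, mem_take_keys hkn B hj]
  rw [hT, Finset.sum_sdiff_eq_sub (Finset.subset_univ _)]

include hkn in
lemma rate_pos {w : Fin n → ℝ} (hw : ∀ i, 0 < w i) {j : ℕ} (hj : j < k) :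
    0 < (∑ ℓ, w ℓ) - ∑ ℓ ∈ Finset.univ.filter (fun ℓ : Fin n => (ℓ : ℕ) < j), w ℓ := by
  rw [← Finset.sum_sdiff_eq_sub (Finset.subset_univ _)]
  refine Finset.sum_pos (fun b _ => hw b) ⟨⟨j, lt_of_lt_of_le hj hkn⟩, ?_⟩
  simp

end FinGlue

lemma expMeasure_Iic_zero {r : ℝ} (hr : 0 < r) : expMeasure r (Iic 0) = 0 := by
  rw [expMeasure_Iic hr 0]
  simp

end RankDiff

open RankDiff


/-- Conditioned on the event that the `k` items of smallest rank are `0, 1, ..., k-1`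
(in increasing rank order), the consecutive rank differences
`r 0, r 1 - r 0, ..., r (k-1) - r (k-2)` are independent, and the `j`-th difference is
exponentially distributed with rate `W - ∑_{ℓ < j} w ℓ`, where `W = ∑ ℓ, w ℓ`. -/
theorem rank_differences_exponential {Ω : Type*} [MeasureSpace Ω]
    [IsProbabilityMeasure (ℙ : Measure Ω)]
    (n k : ℕ) (hk : 1 ≤ k) (hkn : k ≤ n) (w : Fin n → ℝ) (hw : ∀ i, 0 < w i)
    (r : Fin n → Ω → ℝ) (hmeas : ∀ i, Measurable (r i))
    (hindep : iIndepFun r ℙ)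
    (hlaw : ∀ i, Measure.map (r i) ℙ = expMeasure (w i))
    (A : Set Ω)
    (hA : A = {ω | ∀ a b : Fin n, a < b → (a : ℕ) < k → r a ω < r b ω})
    (D : Fin k → Ω → ℝ)
    (hD : ∀ (j : Fin k) (ω : Ω),
      D j ω = r ⟨(j : ℕ), lt_of_lt_of_le j.2 hkn⟩ ω -
        (if h : (j : ℕ) = 0 then 0 else r ⟨(j : ℕ) - 1, by omega⟩ ω)) :
    iIndepFun D (ℙ[|A]) ∧
      ∀ j : Fin k,
        Measure.map (D j) (ℙ[|A])
          = expMeasure ((∑ ℓ, w ℓ) - ∑ ℓ ∈ Finset.univ.filter (fun ℓ : Fin n => (ℓ : ℕ) < (j : ℕ)), w ℓ) := by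

  classical
  haveI : ∀ i : Fin n, IsProbabilityMeasure (expMeasure (w i)) :=
    fun i => isProbabilityMeasure_expMeasure (hw i)
  set μpi : Measure (Fin n → ℝ) := Measure.pi (fun i => expMeasure (w i)) with hμpi
  set rate : Fin k → ℝ := fun j =>
    (∑ ℓ, w ℓ) - ∑ ℓ ∈ Finset.univ.filter (fun ℓ : Fin n => (ℓ : ℕ) < (j : ℕ)), w ℓ with hrate
  -- measurability of A and D
  have hAmeas : MeasurableSet A := by
    rw [hA]
    have : {ω | ∀ a b : Fin n, a < b → (a : ℕ) < k → r a ω < r b ω}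
        = ⋂ (a : Fin n) (b : Fin n) (_ : a < b) (_ : (a : ℕ) < k), {ω | r a ω < r b ω} := by
      ext ω; simp
    rw [this]
    exact MeasurableSet.iInter fun a => MeasurableSet.iInter fun b =>
      MeasurableSet.iInter fun _ => MeasurableSet.iInter fun _ =>
        measurableSet_lt (hmeas a) (hmeas b)
  have hDmeas : ∀ j : Fin k, Measurable (D j) := by
    intro j
    have hDj : D j = fun ω => r ⟨(j : ℕ), lt_of_lt_of_le j.2 hkn⟩ ω -
        (if h : (j : ℕ) = 0 then 0 else r ⟨(j : ℕ) - 1, by omega⟩ ω) := funext (hD j)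
    rw [hDj]
    by_cases hj0 : (j : ℕ) = 0
    · simp only [hj0, dif_pos]
      exact (hmeas _).sub measurable_const
    · simp only [dif_neg hj0]
      exact (hmeas _).sub (hmeas _)
  -- joint law
  set R : Ω → (Fin n → ℝ) := fun ω i => r i ω with hR
  have hRmeas : Measurable R := measurable_pi_lambda _ hmeas
  have hmapR : Measure.map R ℙ = μpi := by
    rw [hμpi]
    refine (Measure.pi_eq fun s hs => ?_).symm
    rw [Measure.map_apply hRmeas (MeasurableSet.univ_pi hs)]
    have hpre : R ⁻¹' (Set.univ.pi s) = ⋂ i ∈ (Finset.univ : Finset (Fin n)), r i ⁻¹' s i := by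
      ext ω; simp [hR, Set.mem_pi]
    rw [hpre, hindep.measure_inter_preimage_eq_mul Finset.univ (fun i _ => hs i)]
    refine Finset.prod_congr rfl fun i _ => ?_
    rw [← hlaw i, Measure.map_apply (hmeas i) (hs i)]
  -- the master identity
  have master : ∀ B : Fin k → Set ℝ, (∀ j, MeasurableSet (B j)) →
      ℙ (A ∩ ⋂ j, D j ⁻¹' B j) = Pfun w Finset.univ (LBl hkn B) := by
    intro B hB
    set d : Fin n × Set ℝ := (keyF hkn ⟨0, hk⟩, Set.univ) with hd
    set G : Set (Fin n → ℝ) := {x | (∀ a b : Fin n, a < b → (a : ℕ) < k → x a < x b) ∧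
        ∀ j : Fin k, x ⟨(j : ℕ), lt_of_lt_of_le j.2 hkn⟩ -
          (if h : (j : ℕ) = 0 then 0 else x ⟨(j : ℕ) - 1, by omega⟩) ∈ B j} with hG
    have hdite : ∀ j : Fin k, Measurable (fun x : Fin n → ℝ =>
        x ⟨(j : ℕ), lt_of_lt_of_le j.2 hkn⟩ -
          (if h : (j : ℕ) = 0 then 0 else x ⟨(j : ℕ) - 1, by omega⟩)) := by
      intro j
      by_cases hj0 : (j : ℕ) = 0
      · simp only [dif_pos hj0]
        exact (measurable_pi_apply _).sub measurable_const
      · simp only [dif_neg hj0]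
        exact (measurable_pi_apply _).sub (measurable_pi_apply _)
    have hGmeas : MeasurableSet G := by
      have hsplit : G = (⋂ (a : Fin n) (b : Fin n) (_ : a < b) (_ : (a : ℕ) < k),
            {x : Fin n → ℝ | x a < x b})
          ∩ ⋂ j : Fin k, (fun x : Fin n → ℝ => x ⟨(j : ℕ), lt_of_lt_of_le j.2 hkn⟩ -
            (if h : (j : ℕ) = 0 then 0 else x ⟨(j : ℕ) - 1, by omega⟩)) ⁻¹' (B j) := by
        ext x
        simp [hG]
      rw [hsplit]
      refine MeasurableSet.inter ?_ (MeasurableSet.iInter fun j => (hdite j) (hB j))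
      exact MeasurableSet.iInter fun a => MeasurableSet.iInter fun b =>
        MeasurableSet.iInter fun _ => MeasurableSet.iInter fun _ =>
          measurableSet_lt (measurable_pi_apply a) (measurable_pi_apply b)
    have hpre : R ⁻¹' G = A ∩ ⋂ j, D j ⁻¹' B j := by
      ext ω
      simp only [Set.mem_preimage, Set.mem_inter_iff, Set.mem_iInter, hA, Set.mem_setOf_eq, hG]
      constructor
      · rintro ⟨h1, h2⟩
        exact ⟨h1, fun j => by rw [hD j ω]; exact h2 j⟩
      · rintro ⟨h1, h2⟩
        refine ⟨h1, fun j => ?_⟩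
        have := h2 j
        rw [hD j ω] at this
        exact this
    have hInt : ℙ (A ∩ ⋂ j, D j ⁻¹' B j) = μpi G := by
      rw [← hpre, ← hmapR, Measure.map_apply hRmeas hGmeas]
    set Pos : Set (Fin n → ℝ) := {x | ∀ b, 0 < x b} with hPos
    have hPosnull : μpi Posᶜ = 0 := by
      have hcompl : Posᶜ = ⋃ b : Fin n, (fun x : Fin n → ℝ => x b) ⁻¹' (Set.Iic 0) := by
        ext x
        simp [hPos, not_lt]
      rw [hcompl]
      refine measure_iUnion_null fun b => ?_
      have hset : (fun x : Fin n → ℝ => x b) ⁻¹' (Set.Iic 0)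
          = Set.univ.pi (fun i => if i = b then Set.Iic (0 : ℝ) else Set.univ) := by
        ext x
        simp only [Set.mem_preimage, Set.mem_pi, Set.mem_univ, forall_const]
        constructor
        · intro h i
          by_cases hib : i = b
          · subst hib; simpa using h
          · simp [hib]
        · intro h
          have := h b
          simpa using this
      rw [hμpi, hset, Measure.pi_pi]
      exact Finset.prod_eq_zero (Finset.mem_univ b)
        (by simp [expMeasure_Iic_zero (hw b)])
    have hEvEq : G ∩ Pos = Ev Finset.univ (LBl hkn B) 0 := by
      ext x
      rw [Set.mem_inter_iff, mem_Ev_iff d (LBl hkn B) Finset.univ (LBl_keys_nodup hkn B)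
        (fun p _ => Finset.mem_univ _) 0 x]
      constructor
      · rintro ⟨⟨hchain, hdiff⟩, hpos⟩
        refine ⟨fun b _ => hpos b, ?_, ?_⟩
        · intro j hj b _ hnb
          rw [LBl_length] at hj
          rw [mem_take_keys hkn B (Nat.succ_le_of_lt hj)] at hnb
          rw [LBl_getD hkn B d hj]
          exact hchain ⟨j, lt_of_lt_of_le hj hkn⟩ b (by
            have hb : (j : ℕ) < (b : ℕ) := by omega
            exact hb) hj
        · intro j hj
          rw [LBl_length] at hj
          rw [LBl_getD hkn B d hj]
          have hdj := hdiff ⟨j, hj⟩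
          by_cases hj0 : j = 0
          · subst hj0
            rw [if_pos rfl]
            rw [dif_pos rfl] at hdj
            exact hdj
          · rw [if_neg hj0, LBl_getD hkn B d (show j - 1 < k by omega)]
            rw [dif_neg hj0] at hdj
            exact hdj
      · rintro ⟨hpos', hC2, hC3⟩
        refine ⟨⟨?_, ?_⟩, fun b => hpos' b (Finset.mem_univ b)⟩
        · intro a b hab hak
          have h2 := hC2 (a : ℕ) (by rw [LBl_length]; exact hak) b (Finset.mem_univ b)
            (by
              rw [mem_take_keys hkn B (Nat.succ_le_of_lt hak)]
              have hb : (a : ℕ) < (b : ℕ) := hab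
              omega)
          rw [LBl_getD hkn B d hak] at h2
          exact h2
        · intro j
          have hjk : (j : ℕ) < k := j.2
          have h3 := hC3 (j : ℕ) (by rw [LBl_length]; exact hjk)
          rw [LBl_getD hkn B d hjk] at h3
          by_cases hj0 : (j : ℕ) = 0
          · rw [dif_pos hj0]
            rw [if_pos hj0] at h3
            exact h3
          · rw [dif_neg hj0]
            rw [if_neg hj0, LBl_getD hkn B d (show (j : ℕ) - 1 < k by omega)] at h3
            exact h3
    calc ℙ (A ∩ ⋂ j, D j ⁻¹' B j) = μpi G := hInt
      _ = μpi (G ∩ Pos) := (measure_inter_conull hPosnull).symm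
      _ = μpi (Ev Finset.univ (LBl hkn B) 0) := by rw [hEvEq]
      _ = Pfun w Finset.univ (LBl hkn B) :=
          measure_Ev hw _ (LBl_keys_nodup hkn B) (LBl_sets_measurable hkn hB)
  have hPA : ℙ A = Pfun w Finset.univ (LBl hkn (fun _ => Set.univ)) := by
    have h := master (fun _ => Set.univ) (fun _ => MeasurableSet.univ)
    simpa using h
  have hPAne : ℙ A ≠ 0 := by
    rw [hPA]
    have hmapmap : LBl hkn (fun _ => Set.univ)
        = (LBl hkn (fun _ => Set.univ)).map (fun p => (p.1, Set.univ)) := by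
      simp [LBl, List.map_map]
    rw [hmapmap]
    exact Pfun_univ_ne_zero hw _ _ (LBl_keys_nodup hkn _) (fun p _ => Finset.mem_univ _)
  have hPAtop : ℙ A ≠ ⊤ := measure_ne_top _ _
  have prodform : ∀ B : Fin k → Set ℝ, (∀ j, MeasurableSet (B j)) →
      ℙ (A ∩ ⋂ j, D j ⁻¹' B j) = ℙ A * ∏ j : Fin k, expMeasure (rate j) (B j) := by
    intro B hB
    rw [master B hB, Pfun_factor hw (LBl hkn B) Finset.univ (LBl_keys_nodup hkn B)
      (fun p _ => Finset.mem_univ _)]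
    have hmm : (LBl hkn B).map (fun p => (p.1, Set.univ)) = LBl hkn (fun _ => Set.univ) := by
      simp [LBl, List.map_map]
    rw [hmm, ← hPA, LBl_length]
    congr 1
    have hterm : ∀ j ∈ Finset.range k,
        expMeasure (∑ b ∈ dropKeys Finset.univ (((LBl hkn B).map Prod.fst).take j), w b)
          ((List.map Prod.snd (LBl hkn B)).getD j Set.univ)
        = (fun m : ℕ => expMeasure ((∑ ℓ, w ℓ)
            - ∑ ℓ ∈ Finset.univ.filter (fun ℓ : Fin n => (ℓ : ℕ) < m), w ℓ)
          ((List.map Prod.snd (LBl hkn B)).getD m Set.univ)) j := by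
      intro j hj
      rw [rate_sum hkn w B (le_of_lt (Finset.mem_range.1 hj))]
    rw [Finset.prod_congr rfl hterm, ← Fin.prod_univ_eq_prod_range]
    refine (Finset.prod_congr rfl fun j _ => ?_).symm
    have hgd : (List.map Prod.snd (LBl hkn B)).getD (j : ℕ) Set.univ = B j := by
      rw [List.getD_eq_getElem _ _ (by simpa [LBl] using j.2)]
      simp [LBl]
    rw [hgd, hrate]
  have main1 : ∀ (S : Finset (Fin k)) (sets : Fin k → Set ℝ),
      (∀ j ∈ S, MeasurableSet (sets j)) →
      (ℙ[|A]) (⋂ j ∈ S, D j ⁻¹' sets j) = ∏ j ∈ S, expMeasure (rate j) (sets j) := by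
    intro S sets hsets
    set B' : Fin k → Set ℝ := fun j => if j ∈ S then sets j else Set.univ with hB'
    have hB'meas : ∀ j, MeasurableSet (B' j) := fun j => by
      by_cases hj : j ∈ S
      · simpa [hB', hj] using hsets j hj
      · simp [hB', hj]
    have hiInt : (⋂ j ∈ S, D j ⁻¹' sets j) = ⋂ j, D j ⁻¹' B' j := by
      ext ω
      simp only [Set.mem_iInter, Set.mem_preimage]
      constructor
      · intro h j
        by_cases hj : j ∈ S
        · simpa [hB', hj] using h j hj
        · simp [hB', hj]
      · intro h j hj
        have := h j
        simpa [hB', hj] using this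
    rw [hiInt, cond_apply hAmeas, prodform B' hB'meas, ← mul_assoc,
      ENNReal.inv_mul_cancel hPAne hPAtop, one_mul]
    have hsub : ∏ j ∈ S, expMeasure (rate j) (B' j)
        = ∏ j : Fin k, expMeasure (rate j) (B' j) :=
      Finset.prod_subset (Finset.subset_univ S) (fun j _ hj => by
        have : B' j = Set.univ := by simp [hB', hj]
        rw [this, hrate, expMeasure_univ (rate_pos hkn hw j.2)])
    rw [← hsub]
    exact (Finset.prod_congr rfl fun j hj => by rw [hB']; simp [hj]).symm
  constructor
  · rw [ProbabilityTheory.iIndepFun_iff_measure_inter_preimage_eq_mul]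
    intro S sets hsets
    rw [main1 S sets hsets]
    refine Finset.prod_congr rfl fun j hj => ?_
    have h1 := main1 {j} sets (fun i hi => by
      rw [Finset.mem_singleton] at hi
      exact hi ▸ hsets j hj)
    simp only [Finset.set_biInter_singleton, Finset.prod_singleton] at h1
    exact h1.symm
  · intro j
    refine Measure.ext fun s hs => ?_
    rw [Measure.map_apply (hDmeas j) hs]
    have h1 := main1 {j} (fun _ => s) (fun i _ => hs)
    simp only [Finset.set_biInter_singleton, Finset.prod_singleton] at h1
    exact h1
end

section
/- Refining a partition cannot decrease variance in HTp: if one measurable partition of the sample space is a refinement of another, and adjusted weights a_fine(i) and a_coarse(i) are defined for item i by the HTp rule (w(i) divided by the conditional inclusion probability of i in the part containing the outcome, and 0 when i is not included), then on each coarse part the coarse adjusted weight equals the conditional expectation of the fine adjusted weight given inclusion-pattern information, and consequently Var(a_coarse(i)) ≤ Var(a_fine(i)). -/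
open MeasureTheory ProbabilityTheory

/-- Coarsening the partition in HTp cannot increase variance: if the partition
`{C ℓ}` is obtained by merging parts of the partition `{P j}` (via an assignment
`c : ℕ → ℕ` with `C ℓ = ⋃_{j : c j = ℓ} P j`), and `a_fine`, `a_coarse` are the
HTp adjusted weights of an item with weight `w` and inclusion event `A`
(equal to `w` divided by the conditional inclusion probability on the part containing
the outcome, and `0` off `A`), then `Var(a_coarse) ≤ Var(a_fine)`. -/
theorem htp_coarse_variance_le {Ω : Type*} [MeasureSpace Ω]
    [IsProbabilityMeasure (ℙ : Measure Ω)]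
    (w : ℝ) (P : ℕ → Set Ω)
    (hPmeas : ∀ j, MeasurableSet (P j)) (hPdisj : Pairwise (Function.onFun Disjoint P))
    (hPcover : (⋃ j, P j) = Set.univ) (hPpos : ∀ j, 0 < ℙ (P j))
    (c : ℕ → ℕ) (C : ℕ → Set Ω) (hC : ∀ ℓ, C ℓ = ⋃ j ∈ {j | c j = ℓ}, P j)
    (A : Set Ω) (hA : MeasurableSet A) (hApos : ∀ j, 0 < ℙ (A ∩ P j))
    (afine acoarse : Ω → ℝ)
    (hfineA : ∀ j, ∀ ω ∈ A ∩ P j,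
      afine ω = w * (ℙ (P j)).toReal / (ℙ (A ∩ P j)).toReal)
    (hfine0 : ∀ ω, ω ∉ A → afine ω = 0)
    (hcoarseA : ∀ ℓ, ∀ ω ∈ A ∩ C ℓ,
      acoarse ω = w * (ℙ (C ℓ)).toReal / (ℙ (A ∩ C ℓ)).toReal)
    (hcoarse0 : ∀ ω, ω ∉ A → acoarse ω = 0)
    (hfineL2 : MemLp afine 2 ℙ) (hcoarseL2 : MemLp acoarse 2 ℙ) :
    variance acoarse ℙ ≤ variance afine ℙ := by
  have hCmeas : ∀ ℓ, MeasurableSet (C ℓ) := by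
    intro ℓ; rw [hC]
    exact MeasurableSet.biUnion (Set.to_countable _) fun j _ => hPmeas j
  have hint_fine : Integrable afine ℙ := hfineL2.integrable one_le_two
  have hint_coarse : Integrable acoarse ℙ := hcoarseL2.integrable one_le_two
  -- disjointness of A ∩ C ℓ
  have hCdisj : Pairwise (Function.onFun Disjoint fun ℓ => A ∩ C ℓ) := by
    intro ℓ ℓ' hne
    rw [Function.onFun, Set.disjoint_left]
    rintro x ⟨hxA, hxC⟩ ⟨hxA', hxC'⟩
    rw [hC] at hxC hxC'
    obtain ⟨j, hj, hxP⟩ := Set.mem_iUnion₂.1 hxC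
    obtain ⟨j', hj', hxP'⟩ := Set.mem_iUnion₂.1 hxC'
    have hjj : j ≠ j' := by rintro rfl; exact hne (hj ▸ hj')
    exact Set.disjoint_left.1 (hPdisj hjj) hxP hxP'
  have hACunion : A = ⋃ ℓ, A ∩ C ℓ := by
    rw [← Set.inter_iUnion]
    have hcov : (⋃ ℓ, C ℓ) = Set.univ := by
      apply Set.eq_univ_of_univ_subset
      rw [← hPcover]
      refine Set.iUnion_subset fun j x hx => ?_
      exact Set.mem_iUnion.2 ⟨c j, (hC (c j)).symm ▸ Set.mem_biUnion rfl hx⟩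
    rw [hcov, Set.inter_univ]
  -- integral of afine on A ∩ P j
  have h1 : ∀ j, ∫ ω in A ∩ P j, afine ω = w * (ℙ (P j)).toReal := by
    intro j
    have hq : (ℙ (A ∩ P j)).toReal ≠ 0 :=
      (ENNReal.toReal_pos (hApos j).ne' (measure_ne_top _ _)).ne'
    rw [setIntegral_congr_fun (hA.inter (hPmeas j)) (fun ω hω => hfineA j ω hω),
      setIntegral_const, smul_eq_mul]
    field_simp
    rw [measureReal_def]; ring
  -- A ∩ C ℓ as a union over the subtype
  have hACl : ∀ ℓ, A ∩ C ℓ = ⋃ j : {j // c j = ℓ}, A ∩ P j := by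
    intro ℓ
    rw [hC, ← Set.inter_iUnion]
    congr 1
    ext x
    simp [Set.mem_iUnion]
  have hsubdisj : ∀ ℓ, Pairwise (Function.onFun Disjoint
      fun j : {j // c j = ℓ} => A ∩ P (j : ℕ)) := by
    intro ℓ j j' hne
    have : (j : ℕ) ≠ (j' : ℕ) := fun e => hne (Subtype.ext e)
    exact (hPdisj this).mono Set.inter_subset_right Set.inter_subset_right
  -- measure of C ℓ as tsum
  have hCmeasure : ∀ ℓ, (ℙ (C ℓ)).toReal = ∑' j : {j // c j = ℓ}, (ℙ (P (j : ℕ))).toReal := by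
    intro ℓ
    have hCl : C ℓ = ⋃ j : {j // c j = ℓ}, P (j : ℕ) := by
      rw [hC]; ext x; simp [Set.mem_iUnion]
    have hdisj : Pairwise (Function.onFun Disjoint fun j : {j // c j = ℓ} => P (j : ℕ)) := by
      intro j j' hne
      exact hPdisj fun e => hne (Subtype.ext e)
    rw [hCl, measure_iUnion hdisj fun j => hPmeas _,
      ENNReal.tsum_toReal_eq fun j => measure_ne_top _ _]
  -- integral of afine on A ∩ C ℓ
  have h2 : ∀ ℓ, ∫ ω in A ∩ C ℓ, afine ω = w * (ℙ (C ℓ)).toReal := by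
    intro ℓ
    rw [hACl, integral_iUnion (fun j => hA.inter (hPmeas _)) (hsubdisj ℓ)
      (hint_fine.integrableOn), hCmeasure]
    simp_rw [h1]
    rw [tsum_mul_left]
  -- integral of acoarse on A ∩ C ℓ
  have h3 : ∀ ℓ, ∫ ω in A ∩ C ℓ, acoarse ω = w * (ℙ (C ℓ)).toReal := by
    intro ℓ
    by_cases hz : ℙ (A ∩ C ℓ) = 0
    · have hempty : ∀ j, c j ≠ ℓ := by
        intro j hj
        have hsub : A ∩ P j ⊆ A ∩ C ℓ := by
          refine Set.inter_subset_inter_right _ ?_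
          rw [hC]; exact Set.subset_biUnion_of_mem hj
        exact absurd (measure_mono_null hsub hz) (hApos j).ne'
      have hCz : (ℙ (C ℓ)).toReal = 0 := by
        rw [hCmeasure]
        have : IsEmpty {j // c j = ℓ} := ⟨fun j => hempty j j.2⟩
        exact tsum_empty
      rw [Measure.restrict_eq_zero.2 hz, integral_zero_measure, hCz, mul_zero]
    · have hq : (ℙ (A ∩ C ℓ)).toReal ≠ 0 :=
        (ENNReal.toReal_pos hz (measure_ne_top _ _)).ne'
      rw [setIntegral_congr_fun (hA.inter (hCmeas ℓ)) (fun ω hω => hcoarseA ℓ ω hω),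
        setIntegral_const, smul_eq_mul]
      field_simp
      rw [measureReal_def]; ring
  -- cross term vanishes on each A ∩ C ℓ
  have h4 : ∀ ℓ, ∫ ω in A ∩ C ℓ, acoarse ω * (afine ω - acoarse ω) = 0 := by
    intro ℓ
    by_cases hz : ℙ (A ∩ C ℓ) = 0
    · rw [Measure.restrict_eq_zero.2 hz, integral_zero_measure]
    · set k := w * (ℙ (C ℓ)).toReal / (ℙ (A ∩ C ℓ)).toReal with hk
      have : ∫ ω in A ∩ C ℓ, acoarse ω * (afine ω - acoarse ω)
          = ∫ ω in A ∩ C ℓ, k * (afine ω - acoarse ω) :=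
        setIntegral_congr_fun (hA.inter (hCmeas ℓ)) fun ω hω => by
          rw [hcoarseA ℓ ω hω]
      rw [this, integral_const_mul,
        integral_sub (hint_fine.integrableOn) (hint_coarse.integrableOn), h2, h3,
        sub_self, mul_zero]
  -- product is integrable
  have hdL2 : MemLp (afine - acoarse) 2 ℙ := hfineL2.sub hcoarseL2
  have hprod_int : Integrable (fun ω => acoarse ω * (afine ω - acoarse ω)) ℙ := by
    have := (hdL2.smul (φ := acoarse) hcoarseL2
      (p := 2) (q := 2) (r := 1))
    rw [memLp_one_iff_integrable] at this
    exact this.congr (Filter.Eventually.of_forall fun ω => by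
      simp [Pi.smul_apply, smul_eq_mul])
  -- total cross term vanishes
  have hcross : ∫ ω, acoarse ω * (afine ω - acoarse ω) = 0 := by
    rw [← integral_add_compl hA hprod_int]
    have hc1 : ∫ ω in Aᶜ, acoarse ω * (afine ω - acoarse ω) = 0 := by
      rw [setIntegral_congr_fun hA.compl (g := fun _ => (0 : ℝ))
        (fun ω hω => by rw [hcoarse0 ω hω, zero_mul]), integral_zero]
    have hc2 : ∫ ω in A, acoarse ω * (afine ω - acoarse ω) = 0 := by
      rw [hACunion, integral_iUnion (fun ℓ => hA.inter (hCmeas ℓ)) hCdisj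
        (hprod_int.integrableOn)]
      simp [h4]
    rw [hc1, hc2, add_zero]
  -- means coincide
  have hmean : ∫ ω, afine ω = ∫ ω, acoarse ω := by
    have hf : ∫ ω, afine ω = ∑' ℓ, (w * (ℙ (C ℓ)).toReal) := by
      rw [← integral_add_compl hA hint_fine,
        setIntegral_congr_fun hA.compl (g := fun _ => (0 : ℝ)) (fun ω hω => hfine0 ω hω),
        integral_zero, add_zero, hACunion,
        integral_iUnion (fun ℓ => hA.inter (hCmeas ℓ)) hCdisj hint_fine.integrableOn]
      exact tsum_congr h2
    have hg : ∫ ω, acoarse ω = ∑' ℓ, (w * (ℙ (C ℓ)).toReal) := by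
      rw [← integral_add_compl hA hint_coarse,
        setIntegral_congr_fun hA.compl (g := fun _ => (0 : ℝ)) (fun ω hω => hcoarse0 ω hω),
        integral_zero, add_zero, hACunion,
        integral_iUnion (fun ℓ => hA.inter (hCmeas ℓ)) hCdisj hint_coarse.integrableOn]
      exact tsum_congr h3
    rw [hf, hg]
  -- second moments compare
  have hsq_int_c : Integrable (fun ω => acoarse ω ^ 2) ℙ := hcoarseL2.integrable_sq
  have hsq_int_d : Integrable (fun ω => (afine ω - acoarse ω) ^ 2) ℙ := by
    have := hdL2.integrable_sq
    exact this.congr (Filter.Eventually.of_forall fun ω => by simp [Pi.sub_apply])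
  have hmom : ∫ ω, acoarse ω ^ 2 ≤ ∫ ω, afine ω ^ 2 := by
    have heq : ∀ ω, afine ω ^ 2 = acoarse ω ^ 2
        + (2 * (acoarse ω * (afine ω - acoarse ω)) + (afine ω - acoarse ω) ^ 2) := by
      intro ω; ring
    have h5 : Integrable (fun ω => 2 * (acoarse ω * (afine ω - acoarse ω))) ℙ :=
      hprod_int.const_mul 2
    have h6 : Integrable (fun ω => 2 * (acoarse ω * (afine ω - acoarse ω))
        + (afine ω - acoarse ω) ^ 2) ℙ := h5.add hsq_int_d
    have key : ∫ ω, afine ω ^ 2 = (∫ ω, acoarse ω ^ 2)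
        + (2 * (∫ ω, acoarse ω * (afine ω - acoarse ω)) + ∫ ω, (afine ω - acoarse ω) ^ 2) := by
      rw [integral_congr_ae (Filter.Eventually.of_forall heq), integral_add hsq_int_c h6,
        integral_add h5 hsq_int_d, integral_const_mul]
    rw [key, hcross, mul_zero, zero_add]
    exact le_add_of_nonneg_right (integral_nonneg fun ω => sq_nonneg _)
  rw [variance_eq_sub hfineL2, variance_eq_sub hcoarseL2, hmean]
  simp only [Pi.pow_apply]
  exact sub_le_sub_right hmom _
end

section
/- Recurrence for the inclusion probability function: for a finite set s of items with positive weights w(i), ℓ > 0, and i ∈ s, define f(s,ℓ) = ∫₀^∞ ℓ e^{-ℓx} ∏_{j∈s}(1 - e^{-w(j)x}) dx. Then f(s,ℓ) = f(s∖{i}, ℓ) - f(s∖{i}, ℓ + w(i)) · ℓ/(ℓ + w(i)). -/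
open MeasureTheory

/-- `f s ℓ = ∫₀^∞ ℓ e^{-ℓx} ∏_{j∈s} (1 - e^{-w(j)x}) dx`. -/
noncomputable def f {ι : Type*} (w : ι → ℝ) (s : Finset ι) (ℓ : ℝ) : ℝ :=
  ∫ x in Set.Ioi (0:ℝ), ℓ * Real.exp (-ℓ * x) * ∏ j ∈ s, (1 - Real.exp (-(w j) * x))

lemma integrable_aux {ι : Type*} (w : ι → ℝ) (s : Finset ι) (hw : ∀ j ∈ s, 0 < w j)
    {ℓ : ℝ} (hℓ : 0 < ℓ) :
    IntegrableOn (fun x => ℓ * Real.exp (-ℓ * x) * ∏ j ∈ s, (1 - Real.exp (-(w j) * x)))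
      (Set.Ioi (0:ℝ)) := by
  have hint : IntegrableOn (fun x => ℓ * Real.exp (-ℓ * x)) (Set.Ioi (0:ℝ)) :=
    (exp_neg_integrableOn_Ioi 0 hℓ).const_mul ℓ
  refine hint.mono' ?_ ?_
  · exact (Continuous.aestronglyMeasurable (by fun_prop))
  · filter_upwards [ae_restrict_mem measurableSet_Ioi] with x hx
    have hx0 : 0 < x := hx
    have hprod : 0 ≤ ∏ j ∈ s, (1 - Real.exp (-(w j) * x)) ∧
        ∏ j ∈ s, (1 - Real.exp (-(w j) * x)) ≤ 1 := by
      constructor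
      · refine Finset.prod_nonneg fun j hj => ?_
        have : Real.exp (-(w j) * x) ≤ 1 := by
          apply Real.exp_le_one_iff.mpr
          nlinarith [hw j hj]
        linarith
      · refine Finset.prod_le_one (fun j hj => ?_) (fun j hj => ?_)
        · have : Real.exp (-(w j) * x) ≤ 1 := by
            apply Real.exp_le_one_iff.mpr
            nlinarith [hw j hj]
          linarith
        · have := Real.exp_pos (-(w j) * x); linarith
    have hℓe : 0 ≤ ℓ * Real.exp (-ℓ * x) :=
      mul_nonneg hℓ.le (Real.exp_pos _).le
    rw [Real.norm_eq_abs, abs_mul, abs_of_nonneg hℓe, abs_of_nonneg hprod.1]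
    nlinarith [hprod.1, hprod.2]

/-- Recurrence: `f(s,ℓ) = f(s∖{i},ℓ) - f(s∖{i}, ℓ+w(i)) ⬝ ℓ/(ℓ+w(i))`. -/
theorem f_recurrence {ι : Type*} [DecidableEq ι] (w : ι → ℝ) (s : Finset ι)
    (hw : ∀ j ∈ s, 0 < w j) (ℓ : ℝ) (hℓ : 0 < ℓ) (i : ι) (hi : i ∈ s) :
    f w s ℓ = f w (s.erase i) ℓ - f w (s.erase i) (ℓ + w i) * (ℓ / (ℓ + w i)) := by
  have hwi := hw i hi
  have hℓw : 0 < ℓ + w i := by linarith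
  have hwe : ∀ j ∈ s.erase i, 0 < w j := fun j hj => hw j (Finset.mem_of_mem_erase hj)
  have h1 := integrable_aux w (s.erase i) hwe hℓ
  have h2 := integrable_aux w (s.erase i) hwe hℓw
  have key : ∀ x : ℝ,
      ℓ * Real.exp (-ℓ * x) * ∏ j ∈ s, (1 - Real.exp (-(w j) * x))
      = ℓ * Real.exp (-ℓ * x) * ∏ j ∈ s.erase i, (1 - Real.exp (-(w j) * x))
        - (ℓ / (ℓ + w i)) * ((ℓ + w i) * Real.exp (-(ℓ + w i) * x) *
            ∏ j ∈ s.erase i, (1 - Real.exp (-(w j) * x))) := by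
    intro x
    rw [← Finset.mul_prod_erase s _ hi]
    have hexp : Real.exp (-(ℓ + w i) * x) = Real.exp (-ℓ * x) * Real.exp (-(w i) * x) := by
      rw [← Real.exp_add]; ring_nf
    rw [hexp]
    field_simp
  unfold f
  rw [show (fun x => ℓ * Real.exp (-ℓ * x) * ∏ j ∈ s, (1 - Real.exp (-(w j) * x)))
      = fun x => (ℓ * Real.exp (-ℓ * x) * ∏ j ∈ s.erase i, (1 - Real.exp (-(w j) * x))
        - (ℓ / (ℓ + w i)) * ((ℓ + w i) * Real.exp (-(ℓ + w i) * x) *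
            ∏ j ∈ s.erase i, (1 - Real.exp (-(w j) * x)))) from funext key,
    integral_sub h1 (h2.const_mul _), MeasureTheory.integral_const_mul]
  ring
end

section
/- Log-supermodularity inequality for f: for a finite set c of items with positive weights, an item i ∉ c with weight w(i) > 0, and 0 < ℓ ≤ ℓ', where f(s,ℓ) = ∫₀^∞ ℓ e^{-ℓx} ∏_{j∈s}(1 - e^{-w(j)x}) dx, it holds that f(c, ℓ) · f(c∪{i}, ℓ') ≤ f(c, ℓ') · f(c∪{i}, ℓ). -/
open MeasureTheory

open Set

/-- Correlation-type inequality via symmetrization over the product measure. -/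
lemma corr_lemma (μ : Measure ℝ) [SigmaFinite μ] (p q r s : ℝ → ℝ)
    (hp : Integrable p μ) (hq : Integrable q μ) (hr : Integrable r μ) (hs : Integrable s μ)
    (hpt : ∀ᵐ z ∂(μ.prod μ),
      p z.1 * q z.2 + p z.2 * q z.1 ≤ r z.1 * s z.2 + r z.2 * s z.1) :
    (∫ x, p x ∂μ) * (∫ x, q x ∂μ) ≤ (∫ x, r x ∂μ) * (∫ x, s x ∂μ) := by
  have hA : Integrable (fun z : ℝ × ℝ => p z.1 * q z.2) (μ.prod μ) := hp.mul_prod hq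
  have hA' : Integrable (fun z : ℝ × ℝ => p z.2 * q z.1) (μ.prod μ) := by
    simpa [mul_comm] using hq.mul_prod hp
  have hB : Integrable (fun z : ℝ × ℝ => r z.1 * s z.2) (μ.prod μ) := hr.mul_prod hs
  have hB' : Integrable (fun z : ℝ × ℝ => r z.2 * s z.1) (μ.prod μ) := by
    simpa [mul_comm] using hs.mul_prod hr
  have e1 : ∫ z : ℝ × ℝ, p z.1 * q z.2 ∂(μ.prod μ) = (∫ x, p x ∂μ) * (∫ x, q x ∂μ) :=
    integral_prod_mul p q
  have e1' : ∫ z : ℝ × ℝ, p z.2 * q z.1 ∂(μ.prod μ) = (∫ x, p x ∂μ) * (∫ x, q x ∂μ) := by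
    rw [show (fun z : ℝ × ℝ => p z.2 * q z.1) = fun z : ℝ × ℝ => q z.1 * p z.2 by
      funext z; ring, integral_prod_mul q p, mul_comm]
  have e2 : ∫ z : ℝ × ℝ, r z.1 * s z.2 ∂(μ.prod μ) = (∫ x, r x ∂μ) * (∫ x, s x ∂μ) :=
    integral_prod_mul r s
  have e2' : ∫ z : ℝ × ℝ, r z.2 * s z.1 ∂(μ.prod μ) = (∫ x, r x ∂μ) * (∫ x, s x ∂μ) := by
    rw [show (fun z : ℝ × ℝ => r z.2 * s z.1) = fun z : ℝ × ℝ => s z.1 * r z.2 by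
      funext z; ring, integral_prod_mul s r, mul_comm]
  have key : ∫ z : ℝ × ℝ, (p z.1 * q z.2 + p z.2 * q z.1) ∂(μ.prod μ) ≤
      ∫ z : ℝ × ℝ, (r z.1 * s z.2 + r z.2 * s z.1) ∂(μ.prod μ) :=
    integral_mono_ae (hA.add hA') (hB.add hB') hpt
  rw [integral_add hA hA', integral_add hB hB', e1, e1', e2, e2'] at key
  linarith

set_option maxHeartbeats 1000000 in
/-- Log-supermodularity: for `i ∉ c` and `0 < ℓ ≤ ℓ'`,
`f(c,ℓ) ⬝ f(c∪{i},ℓ') ≤ f(c,ℓ') ⬝ f(c∪{i},ℓ)`. -/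
theorem f_log_supermodular {ι : Type*} [DecidableEq ι] (w : ι → ℝ) (c : Finset ι)
    (hw : ∀ j ∈ c, 0 < w j) (i : ι) (hi : i ∉ c) (hwi : 0 < w i)
    (ℓ ℓ' : ℝ) (hℓ : 0 < ℓ) (hℓℓ' : ℓ ≤ ℓ') :
    f w c ℓ * f w (insert i c) ℓ' ≤ f w c ℓ' * f w (insert i c) ℓ := by
  have hℓ' : 0 < ℓ' := lt_of_lt_of_le hℓ hℓℓ'
  set P : ℝ → ℝ := fun x => ∏ j ∈ c, (1 - Real.exp (-(w j) * x)) with hP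
  set g : ℝ → ℝ := fun x => 1 - Real.exp (-(w i) * x) with hg
  have hP01 : ∀ x : ℝ, 0 < x → 0 ≤ P x ∧ P x ≤ 1 := by
    intro x hx
    constructor
    · exact Finset.prod_nonneg fun j hj => by
        have : Real.exp (-(w j) * x) ≤ 1 := by
          rw [Real.exp_le_one_iff]
          nlinarith [hw j hj]
        linarith
    · exact Finset.prod_le_one
        (fun j hj => by
          have : Real.exp (-(w j) * x) ≤ 1 := by
            rw [Real.exp_le_one_iff]
            nlinarith [hw j hj]
          linarith)
        (fun j hj => by nlinarith [Real.exp_pos (-(w j) * x)])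
  have hg01 : ∀ x : ℝ, 0 < x → 0 ≤ g x ∧ g x ≤ 1 := by
    intro x hx
    constructor
    · have : Real.exp (-(w i) * x) ≤ 1 := by
        rw [Real.exp_le_one_iff]; nlinarith
      simp only [hg]; linarith
    · simp only [hg]; nlinarith [Real.exp_pos (-(w i) * x)]
  -- continuity
  have hPc : Continuous P := by
    apply continuous_finset_prod
    intro j _
    continuity
  have hgc : Continuous g := by continuity
  set μ : Measure ℝ := volume.restrict (Ioi (0:ℝ)) with hμ
  -- integrability helper
  have integ : ∀ (a : ℝ), 0 < a → ∀ (h : ℝ → ℝ), Continuous h →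
      (∀ x, 0 < x → 0 ≤ h x ∧ h x ≤ 1) →
      Integrable (fun x => Real.exp (-a * x) * h x) μ := by
    intro a ha h hc hb
    apply Integrable.mono' (exp_neg_integrableOn_Ioi 0 ha)
      (((Real.continuous_exp.comp (continuous_const.mul continuous_id)).mul
        hc).aestronglyMeasurable)
    filter_upwards [ae_restrict_mem measurableSet_Ioi] with x hx
    have hx' : (0:ℝ) < x := hx
    obtain ⟨h0, h1⟩ := hb x hx'
    simp only [Pi.mul_apply, Function.comp_apply, id_eq, Real.norm_eq_abs, abs_mul]
    rw [abs_of_pos (Real.exp_pos _), abs_of_nonneg h0]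
    nlinarith [Real.exp_pos (-a * x)]
  have hPg : ∀ x, 0 < x → 0 ≤ P x * g x ∧ P x * g x ≤ 1 := by
    intro x hx
    obtain ⟨a1, a2⟩ := hP01 x hx
    obtain ⟨b1, b2⟩ := hg01 x hx
    exact ⟨mul_nonneg a1 b1, by nlinarith⟩
  have hPgc : Continuous (fun x => P x * g x) := hPc.mul hgc
  -- the four integrands
  set p : ℝ → ℝ := fun x => Real.exp (-ℓ * x) * P x with hp
  set q : ℝ → ℝ := fun x => Real.exp (-ℓ' * x) * (P x * g x) with hqd
  set r : ℝ → ℝ := fun x => Real.exp (-ℓ' * x) * P x with hr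
  set s : ℝ → ℝ := fun x => Real.exp (-ℓ * x) * (P x * g x) with hsd
  have hip : Integrable p μ := integ ℓ hℓ P hPc hP01
  have hiq : Integrable q μ := integ ℓ' hℓ' _ hPgc hPg
  have hir : Integrable r μ := integ ℓ' hℓ' P hPc hP01
  have his : Integrable s μ := integ ℓ hℓ _ hPgc hPg
  -- rewrite f in terms of these
  have fc : f w c ℓ = ℓ * ∫ x, p x ∂μ := by
    rw [f, ← integral_const_mul]
    congr 1; funext x; simp only [hp]; ring
  have fc' : f w c ℓ' = ℓ' * ∫ x, r x ∂μ := by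
    rw [f, ← integral_const_mul]
    congr 1; funext x; simp only [hr]; ring
  have fic : f w (insert i c) ℓ = ℓ * ∫ x, s x ∂μ := by
    rw [f, ← integral_const_mul]
    congr 1; funext x
    rw [Finset.prod_insert hi]
    simp only [hsd, hg, hP]; ring
  have fic' : f w (insert i c) ℓ' = ℓ' * ∫ x, q x ∂μ := by
    rw [f, ← integral_const_mul]
    congr 1; funext x
    rw [Finset.prod_insert hi]
    simp only [hqd, hg, hP]; ring
  -- pointwise inequality
  have hpt : ∀ᵐ z ∂(μ.prod μ),
      p z.1 * q z.2 + p z.2 * q z.1 ≤ r z.1 * s z.2 + r z.2 * s z.1 := by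
    rw [hμ, Measure.prod_restrict]
    filter_upwards [ae_restrict_mem (measurableSet_Ioi.prod measurableSet_Ioi)] with z hz
    obtain ⟨hx, hy⟩ := hz
    set x := z.1
    set y := z.2
    have hx' : (0:ℝ) < x := hx
    have hy' : (0:ℝ) < y := hy
    obtain ⟨hPx, _⟩ := hP01 x hx'
    obtain ⟨hPy, _⟩ := hP01 y hy'
    -- main algebraic inequality
    have main : ∀ u v : ℝ, 0 < u → 0 < v → u ≤ v →
        p u * q v + p v * q u ≤ r u * s v + r v * s u := by
      intro u v hu hv huv
      obtain ⟨hPu, _⟩ := hP01 u hu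
      obtain ⟨hPv, _⟩ := hP01 v hv
      have hgm : g u ≤ g v := by
        simp only [hg]
        have : Real.exp (-(w i) * v) ≤ Real.exp (-(w i) * u) := by
          apply Real.exp_le_exp.mpr; nlinarith
        linarith
      have hem : Real.exp (-ℓ * u) * Real.exp (-ℓ' * v) ≤
          Real.exp (-ℓ' * u) * Real.exp (-ℓ * v) := by
        rw [← Real.exp_add, ← Real.exp_add]
        apply Real.exp_le_exp.mpr
        nlinarith
      have hkey : r u * s v + r v * s u - (p u * q v + p v * q u) =
          P u * P v * ((g v - g u) *
            (Real.exp (-ℓ' * u) * Real.exp (-ℓ * v) -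
             Real.exp (-ℓ * u) * Real.exp (-ℓ' * v))) := by
        simp only [hp, hqd, hr, hsd]; ring
      nlinarith [mul_nonneg (mul_nonneg hPu hPv)
        (mul_nonneg (sub_nonneg.mpr hgm) (sub_nonneg.mpr hem))]
    rcases le_total x y with h | h
    · exact main x y hx' hy' h
    · have := main y x hy' hx' h
      linarith
  have := corr_lemma μ p q r s hip hiq hir his hpt
  rw [fc, fc', fic, fic']
  calc (ℓ * ∫ x, p x ∂μ) * (ℓ' * ∫ x, q x ∂μ)
      = ℓ * ℓ' * ((∫ x, p x ∂μ) * ∫ x, q x ∂μ) := by ring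
    _ ≤ ℓ * ℓ' * ((∫ x, r x ∂μ) * ∫ x, s x ∂μ) := by
        apply mul_le_mul_of_nonneg_left this (by positivity)
    _ = (ℓ' * ∫ x, r x ∂μ) * (ℓ * ∫ x, s x ∂μ) := by ring
end

section
/- Decomposition of the probability that a given set occupies the k smallest ranks: for a disjoint finite family {s, {i}} with weights, and ℓ > 0, the identity ∑_{i∈s} [w(i)/(w(i)+ℓ)] · f(s∖{i}, ℓ + w(i)) = f(s, ℓ) holds, where f(s,ℓ) = ∫₀^∞ ℓ e^{-ℓx} ∏_{j∈s}(1 - e^{-w(j)x}) dx. -/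
open MeasureTheory

open Set Real Filter

lemma f_prod_mem {ι : Type*} (w : ι → ℝ) (t : Finset ι) (hw : ∀ j ∈ t, 0 < w j) {x : ℝ}
    (hx : 0 < x) : (∏ j ∈ t, (1 - Real.exp (-(w j) * x))) ∈ Set.Icc (0:ℝ) 1 := by
  constructor
  · refine Finset.prod_nonneg fun j hj => ?_
    have : Real.exp (-(w j) * x) ≤ 1 := by
      apply Real.exp_le_one_iff.mpr
      nlinarith [hw j hj]
    linarith
  · refine Finset.prod_le_one (fun j hj => ?_) (fun j hj => ?_)
    · have : Real.exp (-(w j) * x) ≤ 1 := by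
        apply Real.exp_le_one_iff.mpr
        nlinarith [hw j hj]
      linarith
    · have := Real.exp_pos (-(w j) * x)
      linarith

lemma f_cont {ι : Type*} (w : ι → ℝ) (t : Finset ι) (c : ℝ) :
    Continuous (fun x : ℝ => Real.exp (-c * x) * ∏ j ∈ t, (1 - Real.exp (-(w j) * x))) := by
  exact (Real.continuous_exp.comp (continuous_const.mul continuous_id)).mul
    (continuous_finset_prod _ fun j _ =>
      continuous_const.sub (Real.continuous_exp.comp (continuous_const.mul continuous_id)))

lemma f_integrable {ι : Type*} (w : ι → ℝ) (t : Finset ι) (hw : ∀ j ∈ t, 0 < w j) {c : ℝ}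
    (hc : 0 < c) :
    IntegrableOn (fun x => Real.exp (-c * x) * ∏ j ∈ t, (1 - Real.exp (-(w j) * x)))
      (Set.Ioi (0:ℝ)) := by
  refine Integrable.mono (exp_neg_integrableOn_Ioi 0 hc) ?_ ?_
  · exact (f_cont w t c).aestronglyMeasurable.restrict
  · filter_upwards [ae_restrict_mem measurableSet_Ioi] with x hx
    have hP := f_prod_mem w t hw (mem_Ioi.mp hx)
    rw [Real.norm_eq_abs, Real.norm_eq_abs, abs_mul, abs_of_pos (Real.exp_pos _),
      abs_of_nonneg hP.1]
    nlinarith [Real.exp_pos (-c * x), hP.2]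

/-- Decomposition: `∑_{i∈s} (w(i)/(w(i)+ℓ)) f(s∖{i}, ℓ+w(i)) = f(s,ℓ)`. -/
theorem f_decomposition {ι : Type*} [DecidableEq ι] (w : ι → ℝ) (s : Finset ι)
    (hs : s.Nonempty) (hw : ∀ j ∈ s, 0 < w j) (ℓ : ℝ) (hℓ : 0 < ℓ) :
    ∑ i ∈ s, (w i / (w i + ℓ)) * f w (s.erase i) (ℓ + w i) = f w s ℓ := by
  set F : ℝ → ℝ := fun x => Real.exp (-ℓ * x) * ∏ j ∈ s, (1 - Real.exp (-(w j) * x)) with hF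
  set G : ℝ → ℝ := fun x => ∑ i ∈ s, w i * (Real.exp (-(ℓ + w i) * x) *
    ∏ j ∈ s.erase i, (1 - Real.exp (-(w j) * x))) with hG
  set H : ℝ → ℝ := fun x => ℓ * (Real.exp (-ℓ * x) * ∏ j ∈ s, (1 - Real.exp (-(w j) * x)))
    with hH
  have hwi : ∀ i ∈ s, 0 < ℓ + w i := fun i hi => by linarith [hw i hi]
  -- derivative
  have hderiv : ∀ x : ℝ, HasDerivAt F (G x - H x) x := by
    intro x
    have h1 : HasDerivAt (fun x : ℝ => Real.exp (-ℓ * x)) (-ℓ * Real.exp (-ℓ * x)) x := by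
      simpa [mul_comm] using ((hasDerivAt_id x).const_mul (-ℓ)).exp
    have h2 : ∀ j ∈ s, HasDerivAt (fun x : ℝ => 1 - Real.exp (-(w j) * x))
        (w j * Real.exp (-(w j) * x)) x := by
      intro j hj
      have : HasDerivAt (fun x : ℝ => Real.exp (-(w j) * x))
          (-(w j) * Real.exp (-(w j) * x)) x := by
        simpa [mul_comm] using ((hasDerivAt_id x).const_mul (-(w j))).exp
      simpa using this.const_sub (1:ℝ)
    have hP := HasDerivAt.fun_finsetProd h2
    have hmul := h1.fun_mul hP
    refine hmul.congr_deriv ?_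
    symm
    simp only [hG, hH, smul_eq_mul]
    rw [Finset.mul_sum]
    have : ∀ i ∈ s, w i * (Real.exp (-(ℓ + w i) * x) *
        ∏ j ∈ s.erase i, (1 - Real.exp (-(w j) * x)))
        = Real.exp (-ℓ * x) * ((∏ j ∈ s.erase i, (1 - Real.exp (-(w j) * x))) *
          (w i * Real.exp (-(w i) * x))) := by
      intro i hi
      rw [show (-(ℓ + w i) * x) = (-ℓ * x) + (-(w i) * x) by ring, Real.exp_add]
      ring
    rw [Finset.sum_congr rfl this]
    ring
  -- integrability
  have hGint : IntegrableOn G (Set.Ioi (0:ℝ)) := by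
    refine integrable_finset_sum _ fun i hi => ?_
    exact ((f_integrable w (s.erase i) (fun j hj => hw j (Finset.mem_of_mem_erase hj))
      (hwi i hi)).const_mul (w i))
  have hHint : IntegrableOn H (Set.Ioi (0:ℝ)) :=
    (f_integrable w s hw hℓ).const_mul ℓ
  have hFG : IntegrableOn (fun x => G x - H x) (Set.Ioi (0:ℝ)) := hGint.sub hHint
  -- limits
  have hF0 : F 0 = 0 := by
    obtain ⟨i, hi⟩ := hs
    simp only [hF, mul_zero]
    rw [Finset.prod_eq_zero hi (by simp)]
    ring
  have htop : Tendsto F atTop (nhds 0) := by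
    have ht : Tendsto (fun x : ℝ => Real.exp (-ℓ * x)) atTop (nhds 0) := by
      have : Tendsto (fun x : ℝ => ℓ * x) atTop atTop :=
        Tendsto.const_mul_atTop hℓ tendsto_id
      simpa [Function.comp_def, neg_mul] using
        Real.tendsto_exp_neg_atTop_nhds_zero.comp this
    refine squeeze_zero_norm' ?_ ht
    filter_upwards [eventually_gt_atTop 0] with x hx
    have hP := f_prod_mem w s hw hx
    rw [Real.norm_eq_abs, abs_mul, abs_of_pos (Real.exp_pos _), abs_of_nonneg hP.1]
    nlinarith [Real.exp_pos (-ℓ * x), hP.2]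
  -- FTC
  have hFTC : ∫ x in Set.Ioi (0:ℝ), (G x - H x) = 0 - F 0 :=
    integral_Ioi_of_hasDerivAt_of_tendsto (f_cont w s ℓ).continuousWithinAt
      (fun x _ => hderiv x) hFG htop
  rw [hF0, sub_zero, integral_sub hGint hHint, sub_eq_zero] at hFTC
  have hGsum : ∫ x in Set.Ioi (0:ℝ), G x
      = ∑ i ∈ s, ∫ x in Set.Ioi (0:ℝ), w i * (Real.exp (-(ℓ + w i) * x) *
        ∏ j ∈ s.erase i, (1 - Real.exp (-(w j) * x))) := by
    exact integral_finset_sum _ fun i hi =>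
      ((f_integrable w (s.erase i) (fun j hj => hw j (Finset.mem_of_mem_erase hj))
        (hwi i hi)).const_mul (w i))
  have hfs : f w s ℓ = ∫ x in Set.Ioi (0:ℝ), H x := by
    simp only [f, hH, mul_assoc]
  rw [hfs, ← hFTC, hGsum]
  refine Finset.sum_congr rfl fun i hi => ?_
  have hne : w i + ℓ ≠ 0 := by linarith [hw i hi]
  rw [f]
  rw [show ∀ g : ℝ → ℝ, (∫ x in Set.Ioi (0:ℝ), (ℓ + w i) * Real.exp (-(ℓ + w i) * x) * g x)
    = ∫ x in Set.Ioi (0:ℝ), (ℓ + w i) * (Real.exp (-(ℓ + w i) * x) * g x) from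
    fun g => by simp only [mul_assoc]]
  rw [integral_const_mul, integral_const_mul, ← mul_assoc]
  congr 1
  rw [add_comm ℓ (w i)]
  exact div_mul_cancel₀ _ hne
end

section
/- Negative covariance of subset-conditioning adjusted weights at the analytic core: for a finite set c of items with positive weights, two distinct items i, j ∉ c with weights w(i), w(j) > 0, and ℓ > 0, it holds that f(c∪{j}, ℓ) · f(c∪{i}, ℓ) ≤ f(c∪{i,j}, ℓ) · f(c, ℓ), where f(s,ℓ) = ∫₀^∞ ℓ e^{-ℓx} ∏_{h∈s}(1 - e^{-w(h)x}) dx. -/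
open MeasureTheory

lemma f_aux_integrable {ι : Type*} (w : ι → ℝ) (s : Finset ι)
    (hw : ∀ h ∈ s, 0 < w h) {ℓ : ℝ} (hℓ : 0 < ℓ) :
    IntegrableOn
      (fun x => ℓ * Real.exp (-ℓ * x) * ∏ j ∈ s, (1 - Real.exp (-(w j) * x)))
      (Set.Ioi 0) := by
  apply Integrable.mono' (g := fun x => ℓ * Real.exp (-ℓ * x))
    ((exp_neg_integrableOn_Ioi 0 hℓ).const_mul ℓ)
  · apply Continuous.aestronglyMeasurable
    exact (continuous_const.mul (Real.continuous_exp.comp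
        (continuous_const.mul continuous_id))).mul
      (continuous_finset_prod _ fun k _ => continuous_const.sub
        (Real.continuous_exp.comp (continuous_const.mul continuous_id)))
  · filter_upwards [ae_restrict_mem measurableSet_Ioi] with x hx
    have hx0 : (0:ℝ) < x := hx
    have hprod0 : 0 ≤ ∏ k ∈ s, (1 - Real.exp (-(w k) * x)) := by
      apply Finset.prod_nonneg
      intro k hk
      have hk0 := hw k hk
      have : Real.exp (-(w k) * x) ≤ 1 := Real.exp_le_one_iff.2 (by nlinarith)
      linarith
    have hprod1 : ∏ k ∈ s, (1 - Real.exp (-(w k) * x)) ≤ 1 := by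
      apply Finset.prod_le_one
      · intro k hk
        have hk0 := hw k hk
        have : Real.exp (-(w k) * x) ≤ 1 := Real.exp_le_one_iff.2 (by nlinarith)
        linarith
      · intro k hk
        have := Real.exp_pos (-(w k) * x)
        linarith
    have hbase : 0 ≤ ℓ * Real.exp (-ℓ * x) := by positivity
    rw [Real.norm_eq_abs, abs_mul, abs_of_nonneg hbase, abs_of_nonneg hprod0]
    nlinarith

lemma cheb (F G H : ℝ → ℝ)
    (hF : IntegrableOn F (Set.Ioi 0))
    (hFG : IntegrableOn (fun x => F x * G x) (Set.Ioi 0))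
    (hFH : IntegrableOn (fun x => F x * H x) (Set.Ioi 0))
    (hFGH : IntegrableOn (fun x => F x * G x * H x) (Set.Ioi 0))
    (hF0 : ∀ x ∈ Set.Ioi (0:ℝ), 0 ≤ F x)
    (hmono : ∀ x ∈ Set.Ioi (0:ℝ), ∀ y ∈ Set.Ioi (0:ℝ),
      0 ≤ (G x - G y) * (H x - H y)) :
    (∫ x in Set.Ioi (0:ℝ), F x * H x) * (∫ x in Set.Ioi (0:ℝ), F x * G x)
      ≤ (∫ x in Set.Ioi (0:ℝ), F x * G x * H x) * (∫ x in Set.Ioi (0:ℝ), F x) := by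
  set A := ∫ x in Set.Ioi (0:ℝ), F x * G x * H x with hA
  set B := ∫ x in Set.Ioi (0:ℝ), F x * G x with hB
  set C := ∫ x in Set.Ioi (0:ℝ), F x * H x with hC
  set D := ∫ x in Set.Ioi (0:ℝ), F x with hD
  have inner : ∀ y : ℝ, ∫ x in Set.Ioi (0:ℝ), F x * F y * ((G x - G y) * (H x - H y))
      = F y * (A - H y * B - G y * C + G y * H y * D) := by
    intro y
    have i2 : IntegrableOn (fun x => H y * (F x * G x)) (Set.Ioi 0) := hFG.const_mul _
    have i3 : IntegrableOn (fun x => G y * (F x * H x)) (Set.Ioi 0) := hFH.const_mul _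
    have i4 : IntegrableOn (fun x => G y * H y * F x) (Set.Ioi 0) := hF.const_mul _
    have i12 : IntegrableOn (fun x => F x * G x * H x - H y * (F x * G x))
        (Set.Ioi 0) := hFGH.sub i2
    have i123 : IntegrableOn
        (fun x => F x * G x * H x - H y * (F x * G x) - G y * (F x * H x))
        (Set.Ioi 0) := i12.sub i3
    have e : (fun x => F x * F y * ((G x - G y) * (H x - H y)))
        = fun x => F y * (F x * G x * H x - H y * (F x * G x) - G y * (F x * H x)
            + G y * H y * F x) := by
      funext x; ring
    rw [e, integral_const_mul, integral_add i123 i4, integral_sub i12 i3,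
      integral_sub hFGH i2, integral_const_mul, integral_const_mul, integral_const_mul,
      ← hA, ← hB, ← hC, ← hD]
  have h0 : 0 ≤ ∫ y in Set.Ioi (0:ℝ), F y * (A - H y * B - G y * C + G y * H y * D) := by
    apply setIntegral_nonneg measurableSet_Ioi
    intro y hy
    rw [← inner y]
    apply setIntegral_nonneg measurableSet_Ioi
    intro x hx
    exact mul_nonneg (mul_nonneg (hF0 x hx) (hF0 y hy)) (hmono x hx y hy)
  have j1 : IntegrableOn (fun y => A * F y) (Set.Ioi 0) := hF.const_mul _
  have j2 : IntegrableOn (fun y => B * (F y * H y)) (Set.Ioi 0) := hFH.const_mul _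
  have j3 : IntegrableOn (fun y => C * (F y * G y)) (Set.Ioi 0) := hFG.const_mul _
  have j4 : IntegrableOn (fun y => D * (F y * G y * H y)) (Set.Ioi 0) := hFGH.const_mul _
  have j12 : IntegrableOn (fun y => A * F y - B * (F y * H y)) (Set.Ioi 0) := j1.sub j2
  have j123 : IntegrableOn (fun y => A * F y - B * (F y * H y) - C * (F y * G y))
      (Set.Ioi 0) := j12.sub j3
  have e2 : (fun y => F y * (A - H y * B - G y * C + G y * H y * D))
      = fun y => A * F y - B * (F y * H y) - C * (F y * G y) + D * (F y * G y * H y) := by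
    funext y; ring
  rw [e2, integral_add j123 j4, integral_sub j12 j3, integral_sub j1 j2,
    integral_const_mul, integral_const_mul, integral_const_mul, integral_const_mul,
    ← hA, ← hB, ← hC, ← hD] at h0
  nlinarith [h0]

/-- Analytic core of the negative covariance of subset-conditioning adjusted weights:
`f(c∪{j},ℓ) ⬝ f(c∪{i},ℓ) ≤ f(c∪{i,j},ℓ) ⬝ f(c,ℓ)`. -/
theorem f_neg_cov {ι : Type*} [DecidableEq ι] (w : ι → ℝ) (c : Finset ι)
    (hw : ∀ h ∈ c, 0 < w h) (i j : ι) (hij : i ≠ j) (hi : i ∉ c) (hj : j ∉ c)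
    (hwi : 0 < w i) (hwj : 0 < w j) (ℓ : ℝ) (hℓ : 0 < ℓ) :
    f w (insert j c) ℓ * f w (insert i c) ℓ ≤ f w (insert i (insert j c)) ℓ * f w c ℓ := by
  set F : ℝ → ℝ := fun x => ℓ * Real.exp (-ℓ * x) * ∏ h ∈ c, (1 - Real.exp (-(w h) * x))
    with hFdef
  set G : ℝ → ℝ := fun x => 1 - Real.exp (-(w i) * x) with hGdef
  set H : ℝ → ℝ := fun x => 1 - Real.exp (-(w j) * x) with hHdef
  have hiji : i ∉ insert j c := by simp [Finset.mem_insert, hij, hi]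
  have hwj' : ∀ h ∈ insert j c, 0 < w h := by
    intro h hh; rcases Finset.mem_insert.1 hh with rfl | hh; exacts [hwj, hw h hh]
  have hwi' : ∀ h ∈ insert i c, 0 < w h := by
    intro h hh; rcases Finset.mem_insert.1 hh with rfl | hh; exacts [hwi, hw h hh]
  have hwij : ∀ h ∈ insert i (insert j c), 0 < w h := by
    intro h hh; rcases Finset.mem_insert.1 hh with rfl | hh; exacts [hwi, hwj' h hh]
  have hF : IntegrableOn F (Set.Ioi 0) := f_aux_integrable w c hw hℓ
  have hFG : IntegrableOn (fun x => F x * G x) (Set.Ioi 0) := by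
    refine (f_aux_integrable w (insert i c) hwi' hℓ).congr
      (Filter.Eventually.of_forall fun x => ?_)
    simp only [hFdef, hGdef, Finset.prod_insert hi]; ring
  have hFH : IntegrableOn (fun x => F x * H x) (Set.Ioi 0) := by
    refine (f_aux_integrable w (insert j c) hwj' hℓ).congr
      (Filter.Eventually.of_forall fun x => ?_)
    simp only [hFdef, hHdef, Finset.prod_insert hj]; ring
  have hFGH : IntegrableOn (fun x => F x * G x * H x) (Set.Ioi 0) := by
    refine (f_aux_integrable w (insert i (insert j c)) hwij hℓ).congr
      (Filter.Eventually.of_forall fun x => ?_)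
    simp only [hFdef, hGdef, hHdef, Finset.prod_insert hiji, Finset.prod_insert hj]; ring
  have hF0 : ∀ x ∈ Set.Ioi (0:ℝ), 0 ≤ F x := by
    intro x hx
    have hx0 : (0:ℝ) < x := hx
    apply mul_nonneg (by positivity)
    apply Finset.prod_nonneg
    intro k hk
    have hk0 := hw k hk
    have : Real.exp (-(w k) * x) ≤ 1 := Real.exp_le_one_iff.2 (by nlinarith)
    linarith
  have monoG : ∀ {x y : ℝ}, x ≤ y → G x ≤ G y := by
    intro x y hxy
    have := Real.exp_le_exp.2 (show -(w i) * y ≤ -(w i) * x by nlinarith)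
    simp only [hGdef]; linarith
  have monoH : ∀ {x y : ℝ}, x ≤ y → H x ≤ H y := by
    intro x y hxy
    have := Real.exp_le_exp.2 (show -(w j) * y ≤ -(w j) * x by nlinarith)
    simp only [hHdef]; linarith
  have hmono : ∀ x ∈ Set.Ioi (0:ℝ), ∀ y ∈ Set.Ioi (0:ℝ),
      0 ≤ (G x - G y) * (H x - H y) := by
    intro x _ y _
    rcases le_total x y with h | h
    · nlinarith [monoG h, monoH h]
    · nlinarith [monoG h, monoH h]
  have e1 : f w (insert i c) ℓ = ∫ x in Set.Ioi (0:ℝ), F x * G x := by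
    rw [f]
    refine integral_congr_ae (Filter.Eventually.of_forall fun x => ?_)
    simp only [hFdef, hGdef, Finset.prod_insert hi]; ring
  have e2 : f w (insert j c) ℓ = ∫ x in Set.Ioi (0:ℝ), F x * H x := by
    rw [f]
    refine integral_congr_ae (Filter.Eventually.of_forall fun x => ?_)
    simp only [hFdef, hHdef, Finset.prod_insert hj]; ring
  have e3 : f w (insert i (insert j c)) ℓ = ∫ x in Set.Ioi (0:ℝ), F x * G x * H x := by
    rw [f]
    refine integral_congr_ae (Filter.Eventually.of_forall fun x => ?_)
    simp only [hFdef, hGdef, hHdef, Finset.prod_insert hiji, Finset.prod_insert hj]; ring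
  have e4 : f w c ℓ = ∫ x in Set.Ioi (0:ℝ), F x := by rw [f]
  rw [e1, e2, e3, e4]
  exact cheb F G H hF hFG hFH hFGH hF0 hmono
end
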